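/- arXiv:1608.05432 — 2 statements merged into one kernel-verified Lean document; each statement's English description precedes it below -/
import Mathlib

section
/- Let X and Y be sets and let R ⊆ X × Y be a nonempty relation. Define E_R = {finite nonempty σ ⊆ X : ∃ y, ∀ x ∈ σ, (x,y) ∈ R} and F_R similarly with roles of X and Y swapped. Then the geometric realizations |E_R| and |F_R| are homotopy equivalent. -/
/-- The closed geometric simplex on the finite vertex set `σ`, inside `V → ℝ`. -/
def simplexSet {V : Type*} (σ : Finset V) : Set (V → ℝ) :=
  {f | (∀ v, v ∉ σ → f v = 0) ∧ (∀ v, 0 ≤ f v) ∧ ∑ v ∈ σ, f v = 1}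

/-- The underlying set of the geometric realization of `K`. -/
def realizationSet {V : Type*} (K : Set (Finset V)) : Set (V → ℝ) :=
  {f | ∃ σ ∈ K, f ∈ simplexSet σ}

/-- The geometric realization of the simplicial complex `K`. -/
def Realization {V : Type*} (K : Set (Finset V)) : Type _ := realizationSet K

/-- The geometric realization carries the weak topology: the final topology determined
by the family of closed simplices. -/
instance realizationTopology {V : Type*} (K : Set (Finset V)) :
    TopologicalSpace (Realization K) :=
  ⨆ σ : {σ : Finset V // σ ∈ K},
    TopologicalSpace.coinduced
      (fun f : simplexSet σ.1 => (⟨f.1, σ.1, σ.2, f.2⟩ : Realization K))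
      inferInstance

lemma realization_mono {V : Type*} {K L : Set (Finset V)} (h : K ⊆ L) :
    realizationSet K ⊆ realizationSet L := fun _ ⟨σ, hσ, hf⟩ => ⟨σ, h hσ, hf⟩

/-- The continuous inclusion of geometric realizations induced by an inclusion of
simplicial complexes. -/
noncomputable def inclusionMap {V : Type*} {K L : Set (Finset V)} (h : K ⊆ L) :
    C(Realization K, Realization L) where
  toFun := fun p => ⟨p.1, realization_mono h p.2⟩
  continuous_toFun := by
    refine continuous_iSup_dom.mpr fun σ => ?_
    refine continuous_coinduced_dom.mpr ?_
    refine continuous_iff_coinduced_le.mpr ?_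
    exact le_iSup (fun τ : {σ : Finset V // σ ∈ L} =>
      TopologicalSpace.coinduced
        (fun f : simplexSet τ.1 => (⟨f.1, τ.1, τ.2, f.2⟩ : Realization L))
        inferInstance) ⟨σ.1, h σ.2⟩

/-- The Dowker complex `E_R` of a relation `R ⊆ X × Y`. -/
def dowkerE {X Y : Type*} (R : Set (X × Y)) : Set (Finset X) :=
  {σ | σ.Nonempty ∧ ∃ y : Y, ∀ x ∈ σ, (x, y) ∈ R}

/-- The Dowker complex `F_R` of a relation `R ⊆ X × Y`. -/
def dowkerF {X Y : Type*} (R : Set (X × Y)) : Set (Finset Y) :=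
  {τ | τ.Nonempty ∧ ∃ x : X, ∀ y ∈ τ, (x, y) ∈ R}


noncomputable section
open Classical

lemma mem_coe_toFinset' {α : Type*} {x : α} {l : List α} (h : x ∈ l) :
    x ∈ (↑l.toFinset : Set α) := by
  rw [List.coe_toFinset]
  exact h

lemma toFinset_indep {α : Type*} (i1 i2 : DecidableEq α) (l : List α) :
    @List.toFinset α i1 l = @List.toFinset α i2 l := by
  ext x
  rw [@List.mem_toFinset α i1, @List.mem_toFinset α i2]

variable {W : Type*}

/-- Support of a function as a `Finset` (junk `∅` if infinite). -/
def suppF (q : W → ℝ) : Finset W :=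
  if h : (Function.support q).Finite then h.toFinset else ∅

lemma mem_suppF {q : W → ℝ} (hf : (Function.support q).Finite) {x : W} :
    x ∈ suppF q ↔ q x ≠ 0 := by
  simp [suppF, dif_pos hf, Set.Finite.mem_toFinset, Function.mem_support]

def valsF (q : W → ℝ) : Finset ℝ := (suppF q).image q

def levF (q : W → ℝ) (v : ℝ) : Finset W := (suppF q).filter (fun x => v ≤ q x)

def levels (q : W → ℝ) : Finset (Finset W) := (valsF q).image (levF q)

def nxt (q : W → ℝ) (v : ℝ) : ℝ := WithBot.unbotD 0 (((valsF q).filter (fun w => w < v)).max)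

def minv (q : W → ℝ) (σ : Finset W) : ℝ := WithTop.untopD 0 ((σ.image q).min)

def wgt (q : W → ℝ) : Finset W → ℝ :=
  fun σ => if σ ∈ levels q then (minv q σ - nxt q (minv q σ)) * σ.card else 0

/-- Weighted sum over the level sets. -/
def lsum (q : W → ℝ) (φ : Finset W → ℝ) : ℝ := ∑ σ ∈ levels q, wgt q σ * φ σ

section canonical

variable {q : W → ℝ}

lemma pos_of_mem_valsF (hf : (Function.support q).Finite) (h0 : ∀ x, 0 ≤ q x)
    {v : ℝ} (hv : v ∈ valsF q) : 0 < v := by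
  obtain ⟨x, hx, rfl⟩ := Finset.mem_image.mp hv
  exact lt_of_le_of_ne (h0 x) (Ne.symm ((mem_suppF hf).mp hx))

lemma mem_levF {v : ℝ} {x : W} : x ∈ levF q v ↔ x ∈ suppF q ∧ v ≤ q x := by
  simp [levF]

lemma levF_nonempty {v : ℝ} (hv : v ∈ valsF q) : (levF q v).Nonempty := by
  obtain ⟨x, hx, rfl⟩ := Finset.mem_image.mp hv
  exact ⟨x, mem_levF.mpr ⟨hx, le_refl _⟩⟩

lemma levF_subset {v : ℝ} : levF q v ⊆ suppF q := Finset.filter_subset _ _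

lemma levels_nonempty_mem {σ : Finset W} (hσ : σ ∈ levels q) : σ.Nonempty := by
  obtain ⟨v, hv, rfl⟩ := Finset.mem_image.mp hσ
  exact levF_nonempty hv

lemma levels_subset_supp {σ : Finset W} (hσ : σ ∈ levels q) : σ ⊆ suppF q := by
  obtain ⟨v, hv, rfl⟩ := Finset.mem_image.mp hσ
  exact levF_subset

lemma levF_antitone {v v' : ℝ} (h : v ≤ v') : levF q v' ⊆ levF q v := by
  intro x hx
  rw [mem_levF] at hx ⊢
  exact ⟨hx.1, le_trans h hx.2⟩

lemma levels_chain {σ σ' : Finset W} (hσ : σ ∈ levels q) (hσ' : σ' ∈ levels q) :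
    σ ⊆ σ' ∨ σ' ⊆ σ := by
  obtain ⟨v, hv, rfl⟩ := Finset.mem_image.mp hσ
  obtain ⟨v', hv', rfl⟩ := Finset.mem_image.mp hσ'
  rcases le_total v v' with h | h
  · exact Or.inr (levF_antitone h)
  · exact Or.inl (levF_antitone h)

lemma minv_levF {v : ℝ} (hv : v ∈ valsF q) : minv q (levF q v) = v := by
  have h1 : ((levF q v).image q).min = (v : WithTop ℝ) := by
    apply le_antisymm
    · obtain ⟨x, hx, rfl⟩ := Finset.mem_image.mp hv
      exact Finset.min_le (Finset.mem_image_of_mem q (mem_levF.mpr ⟨hx, le_refl _⟩))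
    · apply Finset.le_min
      intro w hw
      obtain ⟨x, hx, rfl⟩ := Finset.mem_image.mp hw
      exact WithTop.coe_le_coe.mpr (mem_levF.mp hx).2
  rw [minv, h1, WithTop.untopD_coe]

lemma nxt_lt (hf : (Function.support q).Finite) (h0 : ∀ x, 0 ≤ q x)
    {v : ℝ} (hv : v ∈ valsF q) : nxt q v < v := by
  rw [nxt]
  rcases h : ((valsF q).filter (fun w => w < v)).max with _ | w
  · exact pos_of_mem_valsF hf h0 hv
  · have := Finset.mem_of_max h
    exact (Finset.mem_filter.mp this).2

lemma nxt_nonneg (hf : (Function.support q).Finite) (h0 : ∀ x, 0 ≤ q x)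
    {v : ℝ} : 0 ≤ nxt q v := by
  rw [nxt]
  rcases h : ((valsF q).filter (fun w => w < v)).max with _ | w
  · exact le_of_eq (WithBot.unbotD_bot 0).symm
  · have hm := Finset.mem_of_max h
    have := le_of_lt (pos_of_mem_valsF hf h0 (Finset.mem_filter.mp hm).1)
    exact this

lemma wgt_pos (hf : (Function.support q).Finite) (h0 : ∀ x, 0 ≤ q x)
    {σ : Finset W} (hσ : σ ∈ levels q) : 0 < wgt q σ := by
  rw [wgt, if_pos hσ]
  obtain ⟨v, hv, rfl⟩ := Finset.mem_image.mp hσ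
  rw [minv_levF hv]
  apply mul_pos
  · linarith [nxt_lt hf h0 hv]
  · exact_mod_cast Finset.card_pos.mpr (levF_nonempty hv)

lemma wgt_eq_zero {σ : Finset W} (hσ : σ ∉ levels q) : wgt q σ = 0 := if_neg hσ

lemma wgt_nonneg (hf : (Function.support q).Finite) (h0 : ∀ x, 0 ≤ q x)
    (σ : Finset W) : 0 ≤ wgt q σ := by
  by_cases hσ : σ ∈ levels q
  · exact le_of_lt (wgt_pos hf h0 hσ)
  · rw [wgt_eq_zero hσ]

lemma support_wgt_finite : (Function.support (wgt q)).Finite := by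
  apply Set.Finite.subset (levels q).finite_toSet
  intro σ hσ
  simp only [Function.mem_support] at hσ
  by_contra hm
  exact hσ (wgt_eq_zero hm)

lemma suppF_wgt (hf : (Function.support q).Finite) (h0 : ∀ x, 0 ≤ q x) :
    suppF (wgt q) = levels q := by
  ext σ
  rw [mem_suppF support_wgt_finite]
  constructor
  · intro h
    by_contra hm
    exact h (wgt_eq_zero hm)
  · intro h
    exact ne_of_gt (wgt_pos hf h0 h)

/-- the maximal value -/
def vmax (q : W → ℝ) : ℝ := WithBot.unbotD 0 ((valsF q).max)

/-- the top (smallest) level -/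
def topLev (q : W → ℝ) : Finset W := levF q (vmax q)

lemma vmax_mem (hs : (valsF q).Nonempty) : vmax q ∈ valsF q := by
  obtain ⟨w, hw⟩ := Finset.max_of_nonempty hs
  rw [vmax, hw]
  exact Finset.mem_of_max hw

lemma topLev_mem (hs : (valsF q).Nonempty) : topLev q ∈ levels q :=
  Finset.mem_image_of_mem _ (vmax_mem hs)

lemma le_vmax {v : ℝ} (hv : v ∈ valsF q) : v ≤ vmax q := by
  obtain ⟨w, hw⟩ := Finset.max_of_nonempty ⟨v, hv⟩
  rw [vmax, hw]
  exact_mod_cast Finset.le_max_of_eq hv hw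

lemma topLev_subset {σ : Finset W} (hσ : σ ∈ levels q) : topLev q ⊆ σ := by
  obtain ⟨v, hv, rfl⟩ := Finset.mem_image.mp hσ
  exact levF_antitone (le_vmax hv)

lemma valsF_nonempty_of_supp (hs : (suppF q).Nonempty) : (valsF q).Nonempty := by
  obtain ⟨x, hx⟩ := hs
  exact ⟨q x, Finset.mem_image_of_mem q hx⟩

lemma suppF_mem_levels (hs : (suppF q).Nonempty) : suppF q ∈ levels q := by
  have hv : (valsF q).Nonempty := valsF_nonempty_of_supp hs
  obtain ⟨w, hw⟩ := Finset.min_of_nonempty hv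
  have hwm : w ∈ valsF q := Finset.mem_of_min hw
  have heq : levF q w = suppF q := by
    apply Finset.Subset.antisymm levF_subset
    intro x hx
    rw [mem_levF]
    refine ⟨hx, ?_⟩
    exact_mod_cast Finset.min_le_of_eq (Finset.mem_image_of_mem q hx) hw
  rw [← heq]
  exact Finset.mem_image_of_mem _ hwm

/-- every element of maximal value belongs to every level -/
lemma mem_all_levels {y : W} (hy : y ∈ suppF q) (hmax : ∀ z, q z ≤ q y)
    {σ : Finset W} (hσ : σ ∈ levels q) : y ∈ σ := by
  obtain ⟨v, hv, rfl⟩ := Finset.mem_image.mp hσ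
  obtain ⟨x, hx, rfl⟩ := Finset.mem_image.mp hv
  exact mem_levF.mpr ⟨hy, hmax x⟩

end canonical

section sorted

variable (q : W → ℝ) (l : List W)

/-- the `i`-th value along a list, `0` out of range. -/
def aval (i : ℕ) : ℝ := if h : i < l.length then q (l.get ⟨i, h⟩) else 0

variable {q l}

lemma aval_of_lt {i : ℕ} (h : i < l.length) : aval q l i = q (l.get ⟨i, h⟩) := dif_pos h

lemma aval_of_ge {i : ℕ} (h : ¬ i < l.length) : aval q l i = 0 := dif_neg h

lemma aval_nonneg (h0 : ∀ x, 0 ≤ q x) (i : ℕ) : 0 ≤ aval q l i := by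
  rw [aval]; split
  · exact h0 _
  · exact le_refl _

lemma aval_antitone (hsrt : l.Pairwise (fun a b => q b ≤ q a)) (h0 : ∀ x, 0 ≤ q x)
    {i j : ℕ} (hij : i ≤ j) : aval q l j ≤ aval q l i := by
  by_cases hj : j < l.length
  · have hi : i < l.length := lt_of_le_of_lt hij hj
    rw [aval_of_lt hi, aval_of_lt hj]
    rcases eq_or_lt_of_le hij with rfl | hlt
    · exact le_refl _
    · exact hsrt.rel_get_of_lt hlt
  · rw [aval_of_ge hj]
    exact aval_nonneg h0 i

lemma mem_takeWhile_sorted (hsrt : l.Pairwise (fun a b => q b ≤ q a)) {v : ℝ} {x : W} :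
    x ∈ l.takeWhile (fun y => decide (v ≤ q y)) ↔ x ∈ l ∧ v ≤ q x := by
  induction l with
  | nil => simp
  | cons a t ih =>
    have hsct := List.pairwise_cons.mp hsrt
    by_cases hva : v ≤ q a
    · rw [List.takeWhile_cons_of_pos (by simpa using hva)]
      simp only [List.mem_cons, ih hsct.2]
      constructor
      · rintro (rfl | ⟨hx, hv⟩)
        · exact ⟨Or.inl rfl, hva⟩
        · exact ⟨Or.inr hx, hv⟩
      · rintro ⟨rfl | hx, hv⟩
        · exact Or.inl rfl
        · exact Or.inr ⟨hx, hv⟩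
    · rw [List.takeWhile_cons_of_neg (by simpa using hva)]
      simp only [List.not_mem_nil, false_iff, List.mem_cons]
      rintro ⟨rfl | hx, hv⟩
      · exact hva hv
      · exact hva (le_trans hv (hsct.1 x hx))

lemma levF_eq_takeWhile (hsp : Function.support q ⊆ ↑l.toFinset)
    (hsrt : l.Pairwise (fun a b => q b ≤ q a)) {v : ℝ} (hv : 0 < v) :
    levF q v = (l.takeWhile (fun y => decide (v ≤ q y))).toFinset := by
  have hf : (Function.support q).Finite := Set.Finite.subset l.toFinset.finite_toSet hsp
  ext x
  rw [mem_levF, List.mem_toFinset, mem_takeWhile_sorted hsrt, mem_suppF hf]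
  constructor
  · rintro ⟨hx, hvx⟩
    refine ⟨?_, hvx⟩
    have : x ∈ Function.support q := hx
    simpa using hsp this
  · rintro ⟨hx, hvx⟩
    exact ⟨ne_of_gt (lt_of_lt_of_le hv hvx), hvx⟩

lemma card_take_toFinset (hnd : l.Nodup) {j : ℕ} (hj : j < l.length) :
    ((l.take (j+1)).toFinset).card = j + 1 := by
  rw [List.toFinset_card_of_nodup ((List.take_sublist _ _).nodup hnd), List.length_take]
  omega

lemma level_eq_take (hsp : Function.support q ⊆ ↑l.toFinset)
    (hsrt : l.Pairwise (fun a b => q b ≤ q a)) (hnd : l.Nodup) (h0 : ∀ x, 0 ≤ q x)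
    {σ : Finset W} (hσ : σ ∈ levels q) :
    σ = (l.take σ.card).toFinset ∧ 0 < σ.card ∧ σ.card ≤ l.length := by
  have hf : (Function.support q).Finite := Set.Finite.subset l.toFinset.finite_toSet hsp
  obtain ⟨v, hv, rfl⟩ := Finset.mem_image.mp hσ
  have hvpos : 0 < v := pos_of_mem_valsF hf h0 hv
  have htw := levF_eq_takeWhile hsp hsrt hvpos (v := v)
  set tw := l.takeWhile (fun y => decide (v ≤ q y)) with htwdef
  have hpre : tw <+: l := List.takeWhile_prefix _
  have htake : tw = l.take tw.length := List.prefix_iff_eq_take.mp hpre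
  have hndtw : tw.Nodup := (List.takeWhile_sublist _).nodup hnd
  have hcard : (levF q v).card = tw.length := by
    rw [htw, List.toFinset_card_of_nodup hndtw]
  refine ⟨?_, ?_, ?_⟩
  · rw [hcard, htw]
    exact congrArg List.toFinset htake
  · exact Finset.card_pos.mpr (levF_nonempty hv)
  · rw [hcard]
    exact (List.takeWhile_sublist _).length_le

lemma mem_take_toFinset {j : ℕ} {x : W} :
    x ∈ (l.take (j+1)).toFinset ↔ ∃ i : ℕ, ∃ h : i < l.length, i < j + 1 ∧ l.get ⟨i, h⟩ = x := by
  rw [List.mem_toFinset, List.mem_iff_get]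
  constructor
  · rintro ⟨⟨i, hi⟩, rfl⟩
    have hil : i < l.length := lt_of_lt_of_le hi (by rw [List.length_take]; exact min_le_right _ _)
    have hij : i < j + 1 := lt_of_lt_of_le hi (by rw [List.length_take]; exact min_le_left _ _)
    refine ⟨i, hil, hij, ?_⟩
    show l[i] = (l.take (j+1)).get ⟨i, hi⟩
    rw [show (l.take (j+1)).get ⟨i, hi⟩ = (l.take (j+1))[i] from rfl, List.getElem_take]
  · rintro ⟨i, hil, hij, rfl⟩
    have hi : i < (l.take (j+1)).length := by rw [List.length_take]; omega
    refine ⟨⟨i, hi⟩, ?_⟩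
    show (l.take (j+1))[i] = l[i]
    rw [List.getElem_take]

/-- Key computation: the weight of the `(j+1)`-prefix. -/
lemma wgt_take (hsp : Function.support q ⊆ ↑l.toFinset)
    (hsrt : l.Pairwise (fun a b => q b ≤ q a)) (hnd : l.Nodup) (h0 : ∀ x, 0 ≤ q x)
    {j : ℕ} (hj : j < l.length) :
    wgt q ((l.take (j+1)).toFinset) = (aval q l j - aval q l (j+1)) * (j+1) := by
  have hf : (Function.support q).Finite := Set.Finite.subset l.toFinset.finite_toSet hsp
  have hcard := card_take_toFinset hnd hj
  by_cases hA : aval q l (j+1) < aval q l j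
  · -- strict drop: the prefix is a genuine level
    have hvpos : 0 < aval q l j := lt_of_le_of_lt (aval_nonneg h0 _) hA
    set v := aval q l j with hvdef
    set xj := l.get ⟨j, hj⟩ with hxjdef
    have hqxj : q xj = v := (aval_of_lt hj).symm
    have hxj_supp : xj ∈ suppF q := (mem_suppF hf).mpr (by rw [hqxj]; exact ne_of_gt hvpos)
    have hv_vals : v ∈ valsF q := by
      rw [← hqxj]; exact Finset.mem_image_of_mem q hxj_supp
    have hlev : levF q v = (l.take (j+1)).toFinset := by
      ext x
      rw [mem_levF, mem_take_toFinset]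
      constructor
      · rintro ⟨hxs, hvx⟩
        have hxl : x ∈ l := by
          have : x ∈ Function.support q := (mem_suppF hf).mp hxs
          simpa using hsp this
        obtain ⟨⟨i, hi⟩, rfl⟩ := List.mem_iff_get.mp hxl
        refine ⟨i, hi, ?_, rfl⟩
        by_contra hij
        have : aval q l i ≤ aval q l (j+1) := aval_antitone hsrt h0 (by omega)
        rw [aval_of_lt hi] at this
        linarith
      · rintro ⟨i, hil, hij, rfl⟩
        have h1 : v ≤ q (l.get ⟨i, hil⟩) := by
          have := aval_antitone hsrt h0 (show i ≤ j by omega)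
          rwa [aval_of_lt hil] at this
        refine ⟨(mem_suppF hf).mpr (ne_of_gt (lt_of_lt_of_le hvpos h1)), h1⟩
    have hpfx_lev : (l.take (j+1)).toFinset ∈ levels q := by
      rw [← hlev]; exact Finset.mem_image_of_mem _ hv_vals
    have hminv : minv q ((l.take (j+1)).toFinset) = v := by
      rw [← hlev]; exact minv_levF hv_vals
    have hnxt : nxt q v = aval q l (j+1) := by
      by_cases hz : 0 < aval q l (j+1)
      · have hj1 : j + 1 < l.length := by
          by_contra hc
          rw [aval_of_ge hc] at hz
          linarith
        set w := aval q l (j+1) with hwdef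
        have hqxj1 : q (l.get ⟨j+1, hj1⟩) = w := (aval_of_lt hj1).symm
        have hw_supp : l.get ⟨j+1, hj1⟩ ∈ suppF q :=
          (mem_suppF hf).mpr (by rw [hqxj1]; exact ne_of_gt hz)
        have hw_vals : w ∈ valsF q := by
          rw [← hqxj1]; exact Finset.mem_image_of_mem q hw_supp
        have hw_filt : w ∈ (valsF q).filter (fun u => u < v) :=
          Finset.mem_filter.mpr ⟨hw_vals, hA⟩
        have hmax : ((valsF q).filter (fun u => u < v)).max = (w : WithBot ℝ) := by
          apply le_antisymm
          · apply Finset.max_le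
            intro u hu
            obtain ⟨huv, hulv⟩ := Finset.mem_filter.mp hu
            obtain ⟨x, hx, rfl⟩ := Finset.mem_image.mp huv
            have hxl : x ∈ l := by
              have : x ∈ Function.support q := (mem_suppF hf).mp hx
              simpa using hsp this
            obtain ⟨⟨i, hi⟩, rfl⟩ := List.mem_iff_get.mp hxl
            have hij : ¬ i ≤ j := by
              intro hij
              have := aval_antitone hsrt h0 hij
              rw [aval_of_lt hi] at this
              linarith
            have : aval q l i ≤ w := aval_antitone hsrt h0 (by omega)
            rw [aval_of_lt hi] at this
            exact_mod_cast this
          · exact Finset.le_max hw_filt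
        rw [nxt, hmax, WithBot.unbotD_coe]
      · have hz0 : aval q l (j+1) = 0 := le_antisymm (not_lt.mp hz) (aval_nonneg h0 _)
        have hempty : (valsF q).filter (fun u => u < v) = ∅ := by
          apply Finset.eq_empty_of_forall_notMem
          intro u hu
          obtain ⟨huv, hulv⟩ := Finset.mem_filter.mp hu
          have hupos : 0 < u := pos_of_mem_valsF hf h0 huv
          obtain ⟨x, hx, rfl⟩ := Finset.mem_image.mp huv
          have hxl : x ∈ l := by
            have : x ∈ Function.support q := (mem_suppF hf).mp hx
            simpa using hsp this
          obtain ⟨⟨i, hi⟩, rfl⟩ := List.mem_iff_get.mp hxl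
          have hij : ¬ i ≤ j := by
            intro hij
            have := aval_antitone hsrt h0 hij
            rw [aval_of_lt hi] at this
            linarith
          have : aval q l i ≤ aval q l (j+1) := aval_antitone hsrt h0 (by omega)
          rw [aval_of_lt hi, hz0] at this
          linarith
        rw [nxt, hempty, Finset.max_empty, WithBot.unbotD_bot, hz0]
    rw [wgt, if_pos hpfx_lev, hminv, hnxt, hcard]
    push_cast
    ring
  · -- tie (or zero): the prefix is not a level and both sides vanish
    have heq : aval q l (j+1) = aval q l j :=
      le_antisymm (aval_antitone hsrt h0 (by omega)) (not_lt.mp hA)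
    have hnotlev : (l.take (j+1)).toFinset ∉ levels q := by
      intro hmem
      obtain ⟨v', hv', hlev'⟩ := Finset.mem_image.mp hmem
      have hv'pos : 0 < v' := pos_of_mem_valsF hf h0 hv'
      have hxj_mem : l.get ⟨j, hj⟩ ∈ (l.take (j+1)).toFinset :=
        mem_take_toFinset.mpr ⟨j, hj, by omega, rfl⟩
      rw [← hlev'] at hxj_mem
      have hv'le : v' ≤ q (l.get ⟨j, hj⟩) := (mem_levF.mp hxj_mem).2
      have havj : 0 < aval q l j := by
        rw [aval_of_lt hj]; linarith
      have hz : 0 < aval q l (j+1) := by rw [heq]; exact havj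
      have hj1 : j + 1 < l.length := by
        by_contra hc
        rw [aval_of_ge hc] at hz
        linarith
      have hxj1_mem : l.get ⟨j+1, hj1⟩ ∈ levF q v' := by
        rw [mem_levF]
        constructor
        · exact (mem_suppF hf).mpr
            (by rw [← aval_of_lt (q := q) hj1]; exact ne_of_gt hz)
        · rw [← aval_of_lt (q := q) hj1, heq, aval_of_lt hj]; exact hv'le
      rw [hlev'] at hxj1_mem
      obtain ⟨i, hil, hij, hget⟩ := mem_take_toFinset.mp hxj1_mem
      have : (⟨i, hil⟩ : Fin l.length) = ⟨j+1, hj1⟩ :=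
        List.nodup_iff_injective_get.mp hnd hget
      have : i = j + 1 := by simpa using congrArg (·.val) this
      omega
    rw [wgt_eq_zero hnotlev, heq, sub_self, zero_mul]

/-- The master formula: weighted level sums as prefix sums along a sorted list. -/
lemma lsum_eq (hsp : Function.support q ⊆ ↑l.toFinset)
    (hsrt : l.Pairwise (fun a b => q b ≤ q a)) (hnd : l.Nodup) (h0 : ∀ x, 0 ≤ q x)
    (φ : Finset W → ℝ) :
    lsum q φ = ∑ j ∈ Finset.range l.length,
      ((aval q l j - aval q l (j+1)) * (j+1)) * φ ((l.take (j+1)).toFinset) := by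
  have hsub : levels q ⊆ (Finset.range l.length).image (fun j => (l.take (j+1)).toFinset) := by
    intro σ hσ
    obtain ⟨h1, h2, h3⟩ := level_eq_take hsp hsrt hnd h0 hσ
    refine Finset.mem_image.mpr ⟨σ.card - 1, Finset.mem_range.mpr (by omega), ?_⟩
    rw [show σ.card - 1 + 1 = σ.card by omega]
    exact h1.symm
  have h1 : lsum q φ = ∑ σ ∈ (Finset.range l.length).image (fun j => (l.take (j+1)).toFinset),
      wgt q σ * φ σ := by
    rw [lsum]
    apply Finset.sum_subset hsub
    intro σ _ hσ
    rw [wgt_eq_zero hσ, zero_mul]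
  rw [h1, Finset.sum_image ?inj]
  case inj =>
    intro i hi j hj hij
    have hi' := Finset.mem_range.mp hi
    have hj' := Finset.mem_range.mp hj
    have : i + 1 = j + 1 := by
      rw [← card_take_toFinset hnd hi', ← card_take_toFinset hnd hj']; exact congrArg Finset.card hij
    omega
  apply Finset.sum_congr rfl
  intro j hj
  rw [wgt_take hsp hsrt hnd h0 (Finset.mem_range.mp hj)]

lemma tele_sum (a : ℕ → ℝ) (n : ℕ) :
    ∑ j ∈ Finset.range n, (a j - a (j+1)) * (j+1) = (∑ j ∈ Finset.range n, a j) - n * a n := by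
  induction n with
  | zero => simp
  | succ n ih =>
    rw [Finset.sum_range_succ, ih, Finset.sum_range_succ (f := a)]
    push_cast
    ring

lemma aval_cons_succ {a : W} {t : List W} {j : ℕ} :
    aval q (a :: t) (j+1) = aval q t j := by
  by_cases h : j < t.length
  · rw [aval_of_lt (q := q) h, aval_of_lt (q := q) (show j + 1 < (a :: t).length by
      simp; omega)]
    rfl
  · rw [aval_of_ge (q := q) h, aval_of_ge (q := q) (by simp; omega)]

lemma sum_aval (hnd : l.Nodup) :
    ∑ j ∈ Finset.range l.length, aval q l j = ∑ x ∈ l.toFinset, q x := by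
  induction l with
  | nil => simp
  | cons a t ih =>
    have hnd' : t.Nodup := hnd.of_cons
    have hat : a ∉ t := by simpa using (List.nodup_cons.mp hnd).1
    rw [List.toFinset_cons, Finset.sum_insert (by simpa using hat),
      List.length_cons, Finset.sum_range_succ']
    have h1 : ∀ j, aval q (a :: t) (j+1) = aval q t j := fun j => aval_cons_succ
    have h2 : aval q (a :: t) 0 = q a := by
      rw [aval_of_lt (q := q) (by simp)]; rfl
    rw [h2, Finset.sum_congr rfl (fun j _ => h1 j), ih hnd']
    ring

end sorted

section existence

variable {W : Type*}

lemma exists_sorted_perm (q : W → ℝ) (l0 : List W) :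
    ∃ l : List W, l.Perm l0 ∧ l.Pairwise (fun a b => q b ≤ q a) := by
  classical
  set le : W → W → Bool := fun a b => decide (q b ≤ q a) with hle
  refine ⟨l0.mergeSort le, l0.mergeSort_perm le, ?_⟩
  have h := List.pairwise_mergeSort (le := le)
    (fun a b c hab hbc => by
      simp only [hle, decide_eq_true_eq] at *
      linarith)
    (fun a b => by
      simp only [hle, Bool.or_eq_true, decide_eq_true_eq]
      exact le_total (q b) (q a))
    l0
  exact h.imp (fun h => by simpa [hle] using h)

lemma exists_sorted_list (q : W → ℝ) (s : Finset W) :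
    ∃ l : List W, l.Nodup ∧ l.Pairwise (fun a b => q b ≤ q a) ∧ l.toFinset = s := by
  classical
  set le : W → W → Bool := fun a b => decide (q b ≤ q a) with hle
  refine ⟨s.toList.mergeSort le, ?_, ?_, ?_⟩
  · exact ((s.toList.mergeSort_perm le).nodup_iff).mpr s.nodup_toList
  · have h := List.pairwise_mergeSort (le := le)
      (fun a b c hab hbc => by
        simp only [hle, decide_eq_true_eq] at *
        linarith)
      (fun a b => by
        simp only [hle, Bool.or_eq_true, decide_eq_true_eq]
        exact le_total (q b) (q a))
      s.toList
    exact h.imp (fun h => by simpa [hle] using h)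
  · ext x
    rw [List.mem_toFinset, (s.toList.mergeSort_perm le).mem_iff, Finset.mem_toList]

lemma wgt_total {q : W → ℝ} (hf : (Function.support q).Finite) (h0 : ∀ x, 0 ≤ q x) :
    ∑ σ ∈ levels q, wgt q σ = ∑ x ∈ suppF q, q x := by
  obtain ⟨l, hnd, hsrt, hlf⟩ := exists_sorted_list q (suppF q)
  have hsp : Function.support q ⊆ ↑l.toFinset := by
    rw [hlf]
    intro x hx
    exact (mem_suppF hf).mpr hx
  have h1 : lsum q (fun _ => 1) = ∑ σ ∈ levels q, wgt q σ := by
    simp only [lsum]; simp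
  rw [← h1, lsum_eq hsp hsrt hnd h0, ← hlf]
  have h2 : ∀ j ∈ Finset.range l.length,
      ((aval q l j - aval q l (j+1)) * (j+1)) * (fun _ => (1:ℝ)) ((l.take (j+1)).toFinset)
      = (aval q l j - aval q l (j+1)) * (j+1) := by
    intro j hj; simp
  rw [Finset.sum_congr rfl h2, tele_sum, aval_of_ge (q := q) (lt_irrefl _), ← sum_aval hnd]
  simp

end existence

section relmaps

variable {X Y : Type*}

/-- Transpose of a relation. -/
def trr (R : Set (X × Y)) : Set (Y × X) := {p | (p.2, p.1) ∈ R}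

lemma dowkerF_eq_trr (R : Set (X × Y)) : dowkerF R = dowkerE (trr R) := rfl

lemma trr_trr (R : Set (X × Y)) : trr (trr R) = R := rfl

/-- Choice of a witness for a simplex of the Dowker complex. -/
noncomputable def gch (R : Set (X × Y)) [Nonempty Y] : Finset X → Y :=
  fun σ => if h : ∃ y, ∀ x ∈ σ, (x, y) ∈ R then h.choose else Classical.arbitrary Y

lemma gch_spec (R : Set (X × Y)) [Nonempty Y] {σ : Finset X} (hσ : σ ∈ dowkerE R) :
    ∀ x ∈ σ, (x, gch R σ) ∈ R := by
  have h : ∃ y, ∀ x ∈ σ, (x, y) ∈ R := hσ.2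
  rw [gch, dif_pos h]
  exact h.choose_spec

lemma dowkerE_down {R : Set (X × Y)} {σ σ' : Finset X} (h : σ ∈ dowkerE R)
    (hsub : σ' ⊆ σ) (hne : σ'.Nonempty) : σ' ∈ dowkerE R := by
  obtain ⟨-, y, hy⟩ := h
  exact ⟨hne, y, fun x hx => hy x (hsub hx)⟩

/-- choice of an element of a finset -/
noncomputable def aCh [Nonempty X] (σ : Finset X) : X :=
  if h : σ.Nonempty then h.choose else Classical.arbitrary X

lemma aCh_mem [Nonempty X] {σ : Finset X} (h : σ.Nonempty) : aCh σ ∈ σ := by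
  rw [aCh, dif_pos h]; exact h.choose_spec

/-- the bottom of a chain of finsets -/
noncomputable def botc (c : Finset (Finset X)) : Finset X :=
  if h : ∃ σ ∈ c, ∀ σ' ∈ c, σ ⊆ σ' then h.choose else ∅

lemma botc_spec {c : Finset (Finset X)} (hne : c.Nonempty)
    (hch : ∀ σ ∈ c, ∀ σ' ∈ c, σ ⊆ σ' ∨ σ' ⊆ σ) :
    botc c ∈ c ∧ ∀ σ' ∈ c, botc c ⊆ σ' := by
  have h : ∃ σ ∈ c, ∀ σ' ∈ c, σ ⊆ σ' := by
    obtain ⟨σ₀, hσ₀, hmin⟩ := Finset.exists_min_image c Finset.card hne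
    refine ⟨σ₀, hσ₀, fun σ' hσ' => ?_⟩
    rcases hch σ₀ hσ₀ σ' hσ' with h | h
    · exact h
    · rw [Finset.eq_of_subset_of_card_le h (hmin σ' hσ')]
  rw [botc, dif_pos h]
  exact ⟨h.choose_spec.1, h.choose_spec.2⟩

/-- the three basic maps -/
noncomputable def PhiFun (R : Set (X × Y)) [Nonempty Y] : (X → ℝ) → (Y → ℝ) :=
  fun p y => lsum p (fun σ => if gch R σ = y then 1 else 0)

noncomputable def gim (R : Set (X × Y)) [Nonempty Y] (c : Finset (Finset X)) : Finset Y :=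
  c.image (gch R)

noncomputable def PhiTFun (R : Set (X × Y)) [Nonempty Y] : (X → ℝ) → (Y → ℝ) :=
  fun p y => lsum (wgt p) (fun c => if y ∈ gim R c then ((gim R c).card : ℝ)⁻¹ else 0)

noncomputable def IFun [Nonempty X] : (X → ℝ) → (X → ℝ) :=
  fun p x => lsum (wgt p) (fun c => if aCh (botc c) = x then 1 else 0)

end relmaps

section pointdata

variable {W : Type*}

/-- A bundled hypothesis: `q` is a finitely-supported probability vector. -/
structure IsPt (q : W → ℝ) : Prop where
  hf : (Function.support q).Finite
  h0 : ∀ x, 0 ≤ q x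
  hsum : ∑ x ∈ suppF q, q x = 1

lemma IsPt.supp_ne {q : W → ℝ} (h : IsPt q) : (suppF q).Nonempty := by
  by_contra hc
  rw [Finset.not_nonempty_iff_eq_empty] at hc
  have hs := h.hsum
  rw [hc] at hs
  simpa using hs

lemma IsPt.levels_ne {q : W → ℝ} (h : IsPt q) : (levels q).Nonempty :=
  ⟨suppF q, suppF_mem_levels h.supp_ne⟩

lemma IsPt.wgt {q : W → ℝ} (h : IsPt q) : IsPt (wgt q) := by
  refine ⟨support_wgt_finite, wgt_nonneg h.hf h.h0, ?_⟩
  rw [suppF_wgt h.hf h.h0]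
  · rw [wgt_total h.hf h.h0]
    exact h.hsum

lemma IsPt.of_simplexSet {q : W → ℝ} {σ : Finset W} (hq : q ∈ simplexSet σ) : IsPt q := by
  obtain ⟨hv, h0, hs⟩ := hq
  have hsub : Function.support q ⊆ ↑σ := by
    intro x hx
    by_contra hc
    exact hx (hv x (by simpa using hc))
  have hf : (Function.support q).Finite := Set.Finite.subset σ.finite_toSet hsub
  refine ⟨hf, h0, ?_⟩
  rw [Finset.sum_subset (fun x hx => by
      have := (mem_suppF hf).mp hx
      by_contra hc
      exact this (hv x hc))
    (fun x _ hx => by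
      by_contra hc
      exact hx ((mem_suppF hf).mpr hc))]
  exact hs

lemma IsPt.suppF_subset {q : W → ℝ} (h : IsPt q) {σ : Finset W} (hq : q ∈ simplexSet σ) :
    suppF q ⊆ σ := by
  intro x hx
  by_contra hc
  exact (mem_suppF h.hf).mp hx (hq.1 x hc)

lemma IsPt.mem_simplex_supp {q : W → ℝ} (h : IsPt q) : q ∈ simplexSet (suppF q) :=
  ⟨fun v hv => by_contra (fun hc => hv ((mem_suppF h.hf).mpr hc)), h.h0, h.hsum⟩

/-- Master lemma: the "subdivision pushforward" along `m` lands in the simplex on the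
image of the level sets. -/
lemma sdmap_mem_simplexSet {Z : Type*} {q : W → ℝ} (h : IsPt q) (m : Finset W → Z) :
    (fun z => lsum q (fun σ => if m σ = z then 1 else 0)) ∈
      simplexSet ((levels q).image m) := by
  refine ⟨?_, ?_, ?_⟩
  · intro z hz
    simp only [lsum]
    apply Finset.sum_eq_zero
    intro σ hσ
    have : m σ ≠ z := fun hc => hz (hc ▸ Finset.mem_image_of_mem m hσ)
    rw [if_neg this, mul_zero]
  · intro z
    apply Finset.sum_nonneg
    intro σ hσ
    have := wgt_nonneg h.hf h.h0 σ
    positivity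
  · have hinner : ∀ σ ∈ levels q,
        ∑ z ∈ (levels q).image m, (if m σ = z then wgt q σ else 0) = wgt q σ := by
      intro σ hσ
      rw [Finset.sum_ite_eq ((levels q).image m) (m σ) (fun _ => wgt q σ),
        if_pos (Finset.mem_image_of_mem m hσ)]
    calc ∑ z ∈ (levels q).image m, lsum q (fun σ => if m σ = z then 1 else 0)
        = ∑ z ∈ (levels q).image m, ∑ σ ∈ levels q, (if m σ = z then wgt q σ else 0) := by
          apply Finset.sum_congr rfl
          intro z _
          simp only [lsum]
          apply Finset.sum_congr rfl
          intro σ _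
          by_cases hc : m σ = z <;> simp [hc]
      _ = ∑ σ ∈ levels q, ∑ z ∈ (levels q).image m, (if m σ = z then wgt q σ else 0) :=
          Finset.sum_comm
      _ = ∑ σ ∈ levels q, wgt q σ := Finset.sum_congr rfl hinner
      _ = 1 := by rw [wgt_total h.hf h.h0]; exact h.hsum

end pointdata

section simplexlemmas

variable {V : Type*}

lemma simplexSet_mono {σ σ' : Finset V} (h : σ ⊆ σ') {f : V → ℝ}
    (hf : f ∈ simplexSet σ) : f ∈ simplexSet σ' := by
  obtain ⟨hv, h0, hs⟩ := hf
  refine ⟨fun v hv' => hv v (fun hc => hv' (h hc)), h0, ?_⟩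
  rw [← Finset.sum_subset h (fun x _ hx => hv x hx)]
  exact hs

lemma simplexSet_convex {σ : Finset V} {f g : V → ℝ} (hf : f ∈ simplexSet σ)
    (hg : g ∈ simplexSet σ) {t : ℝ} (h0 : 0 ≤ t) (h1 : t ≤ 1) :
    (fun v => (1 - t) * f v + t * g v) ∈ simplexSet σ := by
  obtain ⟨hfv, hf0, hfs⟩ := hf
  obtain ⟨hgv, hg0, hgs⟩ := hg
  refine ⟨fun v hv => by dsimp only; rw [hfv v hv, hgv v hv]; ring, fun v => ?_, ?_⟩
  · dsimp only
    have h1 := hf0 v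
    have h2 := hg0 v
    nlinarith
  · rw [Finset.sum_add_distrib, ← Finset.mul_sum, ← Finset.mul_sum, hfs, hgs]
    ring

lemma realization_isPt {K : Set (Finset V)} {p : V → ℝ} (hp : p ∈ realizationSet K) :
    IsPt p := by
  obtain ⟨σ, -, hs⟩ := hp
  exact IsPt.of_simplexSet hs

end simplexlemmas

section pointwise

variable {X Y : Type*} [Nonempty X] [Nonempty Y] (R : Set (X × Y)) {p : X → ℝ}

lemma suppF_mem_dowker (hp : p ∈ realizationSet (dowkerE R)) :
    suppF p ∈ dowkerE R := by
  obtain ⟨τ, hτ, hs⟩ := hp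
  have hpt := IsPt.of_simplexSet hs
  exact dowkerE_down hτ (hpt.suppF_subset hs) hpt.supp_ne

lemma levels_mem_dowker (hE : suppF p ∈ dowkerE R) {σ : Finset X} (hσ : σ ∈ levels p) :
    σ ∈ dowkerE R :=
  dowkerE_down hE (levels_subset_supp hσ) (levels_nonempty_mem hσ)

/-- the common target simplex -/
noncomputable def Gstar (p : X → ℝ) : Finset Y := (levels p).image (gch R)

lemma Gstar_mem (hp : IsPt p) (hE : suppF p ∈ dowkerE R) : Gstar R p ∈ dowkerF R := by
  have hvne : (valsF p).Nonempty := valsF_nonempty_of_supp hp.supp_ne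
  have htop := topLev_mem (q := p) hvne
  have hne : (topLev p).Nonempty := levels_nonempty_mem htop
  refine ⟨Finset.Nonempty.image hp.levels_ne _, aCh (topLev p), ?_⟩
  intro y hy
  obtain ⟨σ, hσ, rfl⟩ := Finset.mem_image.mp hy
  exact gch_spec R (levels_mem_dowker R hE hσ) _ (topLev_subset hσ (aCh_mem hne))

lemma PhiFun_mem (hp : IsPt p) : PhiFun R p ∈ simplexSet (Gstar R p) :=
  sdmap_mem_simplexSet hp (gch R)

lemma mem_levels_wgt (hp : IsPt p) {c : Finset (Finset X)} (hc : c ∈ levels (wgt p)) :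
    c ⊆ levels p ∧ c.Nonempty ∧ botc c ∈ c ∧ ∀ σ ∈ c, botc c ⊆ σ := by
  have hsub : c ⊆ levels p := by
    have := levels_subset_supp hc
    rwa [suppF_wgt hp.hf hp.h0] at this
  have hne : c.Nonempty := levels_nonempty_mem hc
  have hch : ∀ σ ∈ c, ∀ σ' ∈ c, σ ⊆ σ' ∨ σ' ⊆ σ :=
    fun σ hσ σ' hσ' => levels_chain (hsub hσ) (hsub hσ')
  obtain ⟨h1, h2⟩ := botc_spec hne hch
  exact ⟨hsub, hne, h1, h2⟩

lemma gim_subset_Gstar (hp : IsPt p) {c : Finset (Finset X)} (hc : c ∈ levels (wgt p)) :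
    gim R c ⊆ Gstar R p :=
  Finset.image_subset_image (mem_levels_wgt hp hc).1

lemma PhiTFun_mem (hp : IsPt p) : PhiTFun R p ∈ simplexSet (Gstar R p) := by
  have h2 : IsPt (wgt p) := hp.wgt
  refine ⟨?_, ?_, ?_⟩
  · intro y hy
    simp only [PhiTFun, lsum]
    apply Finset.sum_eq_zero
    intro c hc
    rw [if_neg (fun hmem => hy (gim_subset_Gstar R hp hc hmem)), mul_zero]
  · intro y
    apply Finset.sum_nonneg
    intro c hc
    have h1 := wgt_nonneg h2.hf h2.h0 c
    have : (0:ℝ) ≤ (if y ∈ gim R c then ((gim R c).card : ℝ)⁻¹ else 0) := by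
      split
      · positivity
      · exact le_refl _
    exact mul_nonneg h1 this
  · simp only [PhiTFun, lsum]
    rw [Finset.sum_comm]
    have hinner : ∀ c ∈ levels (wgt p),
        ∑ y ∈ Gstar R p, wgt (wgt p) c * (if y ∈ gim R c then ((gim R c).card : ℝ)⁻¹ else 0)
        = wgt (wgt p) c := by
      intro c hc
      rw [← Finset.mul_sum, Finset.sum_ite_mem,
        Finset.inter_eq_right.mpr (gim_subset_Gstar R hp hc), Finset.sum_const,
        nsmul_eq_mul, mul_inv_cancel₀, mul_one]
      have hne : (gim R c).Nonempty := Finset.Nonempty.image (mem_levels_wgt hp hc).2.1 _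
      exact_mod_cast (Finset.card_pos.mpr hne).ne'
    rw [Finset.sum_congr rfl hinner, wgt_total h2.hf h2.h0]
    rw [suppF_wgt hp.hf hp.h0, wgt_total hp.hf hp.h0]
    exact hp.hsum

/-- the target simplex of the `I` map -/
noncomputable def Astar (p : X → ℝ) : Finset X :=
  (levels (wgt p)).image (fun c => aCh (botc c))

lemma IFun_mem (hp : IsPt p) : IFun p ∈ simplexSet (Astar p) :=
  sdmap_mem_simplexSet hp.wgt (fun c => aCh (botc c))

lemma Astar_subset (hp : IsPt p) : Astar p ⊆ suppF p := by
  intro x hx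
  obtain ⟨c, hc, rfl⟩ := Finset.mem_image.mp hx
  obtain ⟨hsub, hne, hbot, -⟩ := mem_levels_wgt hp hc
  have hbne : (botc c).Nonempty := levels_nonempty_mem (hsub hbot)
  exact levels_subset_supp (hsub hbot) (aCh_mem hbne)

/-- the distinguished vertex for the middle homotopy -/
noncomputable def y0 (p : X → ℝ) : Y := gch R (botc (topLev (wgt p)))

lemma topLev_wgt_mem (hp : IsPt p) : topLev (wgt p) ∈ levels (wgt p) :=
  topLev_mem (valsF_nonempty_of_supp (by
    rw [suppF_wgt hp.hf hp.h0]; exact hp.levels_ne))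

lemma botc_topLev_mem (hp : IsPt p) : botc (topLev (wgt p)) ∈ levels p := by
  obtain ⟨hsub, -, hbot, -⟩ := mem_levels_wgt hp (topLev_wgt_mem hp)
  exact hsub hbot

/-- (a) all vertices of `Astar` are `R`-related to `y0`. -/
lemma aCh_rel (hp : IsPt p) (hE : suppF p ∈ dowkerE R) {c : Finset (Finset X)}
    (hc : c ∈ levels (wgt p)) :
    (aCh (botc c), y0 R p) ∈ R := by
  obtain ⟨hsub, hne, hbot, hmin⟩ := mem_levels_wgt hp hc
  have hc1 : topLev (wgt p) ⊆ c := topLev_subset hc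
  have hbc1 : botc (topLev (wgt p)) ∈ c := hc1 (mem_levels_wgt hp (topLev_wgt_mem hp)).2.2.1
  have hsubset : botc c ⊆ botc (topLev (wgt p)) := hmin _ hbc1
  have hbne : (botc c).Nonempty := levels_nonempty_mem (hsub hbot)
  exact gch_spec R (levels_mem_dowker R hE (botc_topLev_mem hp)) _ (hsubset (aCh_mem hbne))

/-- (b) `y0` has maximal `PhiTFun` value. -/
lemma y0_max (hp : IsPt p) :
    (∀ y, PhiTFun R p y ≤ PhiTFun R p (y0 R p)) ∧ 0 < PhiTFun R p (y0 R p) := by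
  have h2 : IsPt (wgt p) := hp.wgt
  have hy0mem : ∀ c ∈ levels (wgt p), y0 R p ∈ gim R c := by
    intro c hc
    have hc1 : topLev (wgt p) ⊆ c := topLev_subset hc
    have hbc1 : botc (topLev (wgt p)) ∈ c :=
      hc1 (mem_levels_wgt hp (topLev_wgt_mem hp)).2.2.1
    exact Finset.mem_image_of_mem _ hbc1
  constructor
  · intro y
    apply Finset.sum_le_sum
    intro c hc
    apply mul_le_mul_of_nonneg_left _ (wgt_nonneg h2.hf h2.h0 c)
    dsimp only
    rw [if_pos (hy0mem c hc)]
    split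
    · exact le_refl _
    · positivity
  · apply Finset.sum_pos
    · intro c hc
      apply mul_pos (wgt_pos h2.hf h2.h0 hc)
      dsimp only
      rw [if_pos (hy0mem c hc)]
      have hne : (gim R c).Nonempty := Finset.Nonempty.image (mem_levels_wgt hp hc).2.1 _
      have := Finset.card_pos.mpr hne
      positivity
    · exact h2.levels_ne

/-- (c) `y0` lies in every level set of `PhiTFun`. -/
lemma y0_mem_all_levels (hp : IsPt p) {T : Finset Y}
    (hT : T ∈ levels (PhiTFun R p)) : y0 R p ∈ T := by
  have hPt : IsPt (PhiTFun R p) := IsPt.of_simplexSet (PhiTFun_mem R hp)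
  obtain ⟨hmax, hpos⟩ := y0_max R hp
  exact mem_all_levels ((mem_suppF hPt.hf).mpr (ne_of_gt hpos)) hmax hT

/-- the big common simplex for the middle homotopy -/
noncomputable def Dstar (p : X → ℝ) : Finset X :=
  ((levels (PhiTFun R p)).image (gch (trr R))) ∪ Astar p

lemma levels_PhiT_mem_dowkerF (hp : IsPt p) (hE : suppF p ∈ dowkerE R) {T : Finset Y}
    (hT : T ∈ levels (PhiTFun R p)) : T ∈ dowkerF R := by
  have hPt : IsPt (PhiTFun R p) := IsPt.of_simplexSet (PhiTFun_mem R hp)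
  have hsub : T ⊆ Gstar R p :=
    (levels_subset_supp hT).trans (hPt.suppF_subset (PhiTFun_mem R hp))
  rw [dowkerF_eq_trr]
  exact dowkerE_down (by rw [← dowkerF_eq_trr]; exact Gstar_mem R hp hE)
    hsub (levels_nonempty_mem hT)

lemma Dstar_mem (hp : IsPt p) (hE : suppF p ∈ dowkerE R) : Dstar R p ∈ dowkerE R := by
  refine ⟨?_, y0 R p, ?_⟩
  · apply Finset.Nonempty.mono Finset.subset_union_right
    exact Finset.Nonempty.image hp.wgt.levels_ne _
  · intro x hx
    rcases Finset.mem_union.mp hx with hx | hx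
    · obtain ⟨T, hT, rfl⟩ := Finset.mem_image.mp hx
      have hTF : T ∈ dowkerF R := levels_PhiT_mem_dowkerF R hp hE hT
      exact gch_spec (trr R) (by rw [← dowkerF_eq_trr]; exact hTF) _
        (y0_mem_all_levels R hp hT)
    · obtain ⟨c, hc, rfl⟩ := Finset.mem_image.mp hx
      exact aCh_rel R hp hE hc

/-- the middle map `M = Ψ ∘ Φ̃` lands in the `gch (trr R)` part of `Dstar`. -/
lemma MFun_mem (hp : IsPt p) : PhiFun (trr R) (PhiTFun R p) ∈
    simplexSet ((levels (PhiTFun R p)).image (gch (trr R))) :=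
  sdmap_mem_simplexSet (IsPt.of_simplexSet (PhiTFun_mem R hp)) (gch (trr R))

end pointwise

section topology

variable {V : Type*}

lemma isClosed_simplexSet (σ : Finset V) : IsClosed (simplexSet σ) := by
  have h1 : IsClosed {f : V → ℝ | ∀ v, v ∉ σ → f v = 0} := by
    have heq : {f : V → ℝ | ∀ v, v ∉ σ → f v = 0}
        = ⋂ v ∈ {v : V | v ∉ σ}, {f : V → ℝ | f v = 0} := by
      ext f; simp
    rw [heq]
    exact isClosed_biInter (fun v _ => isClosed_eq (continuous_apply v) continuous_const)
  have h2 : IsClosed {f : V → ℝ | ∀ v, 0 ≤ f v} := by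
    have heq : {f : V → ℝ | ∀ v, 0 ≤ f v} = ⋂ v, {f : V → ℝ | 0 ≤ f v} := by
      ext f; simp
    rw [heq]
    exact isClosed_iInter (fun v => isClosed_le continuous_const (continuous_apply v))
  have h3 : IsClosed {f : V → ℝ | ∑ v ∈ σ, f v = 1} :=
    isClosed_eq (continuous_finset_sum σ (fun v _ => continuous_apply v)) continuous_const
  have heq : simplexSet σ = {f : V → ℝ | ∀ v, v ∉ σ → f v = 0}
      ∩ ({f : V → ℝ | ∀ v, 0 ≤ f v} ∩ {f : V → ℝ | ∑ v ∈ σ, f v = 1}) := by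
    ext f; exact Iff.rfl
  rw [heq]
  exact h1.inter (h2.inter h3)

lemma isCompact_simplexSet (σ : Finset V) : IsCompact (simplexSet σ) := by
  apply IsCompact.of_isClosed_subset
    (isCompact_univ_pi (fun v : V => isCompact_Icc (a := (0:ℝ)) (b := 1)))
    (isClosed_simplexSet σ)
  intro f hf
  obtain ⟨hv, h0, hs⟩ := hf
  intro v _
  refine ⟨h0 v, ?_⟩
  by_cases hvσ : v ∈ σ
  · calc f v ≤ ∑ w ∈ σ, f w := Finset.single_le_sum (fun w _ => h0 w) hvσ
    _ = 1 := hs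
  · rw [hv v hvσ]; norm_num

instance simplexSet_compactSpace (σ : Finset V) : CompactSpace (simplexSet σ) :=
  isCompact_iff_compactSpace.mp (isCompact_simplexSet σ)

/-- canonical inclusion of a closed simplex into the realization -/
noncomputable def toReal {K : Set (Finset V)} (σ : Finset V) (hσ : σ ∈ K) :
    C(simplexSet σ, Realization K) where
  toFun := fun f => ⟨f.1, σ, hσ, f.2⟩
  continuous_toFun := by
    refine continuous_iff_coinduced_le.mpr ?_
    exact le_iSup (fun τ : {σ : Finset V // σ ∈ K} =>
      TopologicalSpace.coinduced
        (fun f : simplexSet τ.1 => (⟨f.1, τ.1, τ.2, f.2⟩ : Realization K))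
        inferInstance) ⟨σ, hσ⟩

lemma continuous_from_realization {Z : Type*} [TopologicalSpace Z] {K : Set (Finset V)}
    (f : Realization K → Z)
    (h : ∀ (σ : Finset V) (hσ : σ ∈ K),
      Continuous (fun u : simplexSet σ => f (toReal σ hσ u))) :
    Continuous f :=
  continuous_iSup_dom.mpr fun σ => continuous_coinduced_dom.mpr (h σ.1 σ.2)

/-- Continuity into a realization via ambient continuity plus a finite subcomplex
containing the image. -/
lemma continuous_into_realization {A : Type*} [TopologicalSpace A] {L : Set (Finset V)}
    (f : A → Realization L) (hc : Continuous (fun a => (f a).1))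
    (T : Finset (Finset V)) (hT : ∀ ρ ∈ T, ρ ∈ L)
    (himg : ∀ a, ∃ ρ ∈ T, (f a).1 ∈ simplexSet ρ) : Continuous f := by
  rw [continuous_iff_isClosed]
  intro C hC
  have hkey : ∀ ρ (hρ : ρ ∈ T), f ⁻¹' C ∩ {a | (f a).1 ∈ simplexSet ρ}
      = (fun a => (f a).1) ⁻¹' (Subtype.val '' ((toReal ρ (hT ρ hρ)) ⁻¹' C)) := by
    intro ρ hρ
    ext a
    simp only [Set.mem_inter_iff, Set.mem_preimage, Set.mem_image, Set.mem_setOf_eq]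
    constructor
    · rintro ⟨haC, hamem⟩
      refine ⟨⟨(f a).1, hamem⟩, ?_, rfl⟩
      have : toReal ρ (hT ρ hρ) ⟨(f a).1, hamem⟩ = f a := Subtype.ext rfl
      rw [this]
      exact haC
    · rintro ⟨u, huC, hval⟩
      have heq : toReal ρ (hT ρ hρ) u = f a := Subtype.ext hval
      rw [heq] at huC
      refine ⟨huC, ?_⟩
      rw [← hval]
      exact u.2
  have hclosed : ∀ ρ (hρ : ρ ∈ T), IsClosed (Subtype.val '' ((toReal ρ (hT ρ hρ)) ⁻¹' C)) := by
    intro ρ hρ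
    have hP : IsClosed ((toReal ρ (hT ρ hρ)) ⁻¹' C) := hC.preimage (toReal ρ (hT ρ hρ)).continuous
    have hcpt : IsCompact ((toReal ρ (hT ρ hρ)) ⁻¹' C) := hP.isCompact
    exact (hcpt.image continuous_subtype_val).isClosed
  have hcover : f ⁻¹' C = ⋃ ρ : {ρ // ρ ∈ T}, ((fun a => (f a).1) ⁻¹' (Subtype.val ''
      ((toReal ρ.1 (hT ρ.1 ρ.2)) ⁻¹' C))) := by
    ext a
    simp only [Set.mem_iUnion, Set.mem_preimage]
    constructor
    · intro haC
      obtain ⟨ρ, hρ, hmem⟩ := himg a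
      refine ⟨⟨ρ, hρ⟩, ?_⟩
      exact (hkey ρ hρ).subset ⟨haC, hmem⟩
    · rintro ⟨⟨ρ, hρ⟩, hmem⟩
      have : a ∈ f ⁻¹' C ∩ {a | (f a).1 ∈ simplexSet ρ} := by
        rw [hkey ρ hρ]
        exact hmem
      exact this.1
  rw [hcover]
  exact isClosed_iUnion_of_finite (fun ρ : {ρ // ρ ∈ T} => (hclosed ρ.1 ρ.2).preimage hc)

/-- pasting along a finite closed cover -/
lemma continuous_of_finite_closed_cover {A Z ι : Type*} [TopologicalSpace A]
    [TopologicalSpace Z] [Finite ι] (f : A → Z) (c : ι → Set A)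
    (hcov : ⋃ i, c i = Set.univ) (hcl : ∀ i, IsClosed (c i))
    (hcont : ∀ i, ContinuousOn f (c i)) : Continuous f :=
  LocallyFinite.continuous (locallyFinite_of_finite c) hcov hcl hcont

lemma continuous_val_realization {K : Set (Finset V)} :
    Continuous (fun p : Realization K => p.1) := by
  apply continuous_from_realization
  intro σ hσ
  exact continuous_subtype_val

/-- building continuous maps out of `I × Realization K` simplexwise -/
lemma continuous_homotopy_from_realization {V' : Type*} {K : Set (Finset V)}
    {L : Set (Finset V')} (H : unitInterval × Realization K → Realization L)
    (h : ∀ (σ : Finset V) (hσ : σ ∈ K),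
      Continuous (fun z : simplexSet σ × unitInterval => H (z.2, toReal σ hσ z.1))) :
    Continuous H := by
  have hcurry : ∀ p : Realization K, Continuous (fun t => H (t, p)) := by
    intro p
    obtain ⟨σ, hσ, hmem⟩ := p.2
    have h1 := (h σ hσ).comp (Continuous.prodMk
      (continuous_const (y := (⟨p.1, hmem⟩ : simplexSet σ))) continuous_id)
    have heq : toReal σ hσ ⟨p.1, hmem⟩ = p := Subtype.ext rfl
    simpa [heq, Function.comp_def] using h1
  set F : Realization K → C(unitInterval, Realization L) :=
    fun p => ⟨fun t => H (t, p), hcurry p⟩ with hF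
  have hFc : Continuous F := by
    apply continuous_from_realization
    intro σ hσ
    have hG := (ContinuousMap.mk _ (h σ hσ)).curry.continuous
    have heq : (fun u : simplexSet σ => F (toReal σ hσ u))
        = fun u => (ContinuousMap.mk _ (h σ hσ)).curry u := by
      funext u
      exact ContinuousMap.ext (fun t => rfl)
    rw [heq]
    exact hG
  have huc := (ContinuousMap.mk F hFc).uncurry.continuous
  have : Continuous (fun z : Realization K × unitInterval => H (z.2, z.1)) := huc
  exact this.comp (continuous_snd.prodMk continuous_fst)

end topology

section regions

variable {X : Type*}

/-- affine formula for the weight of the `(k+1)`-prefix -/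
def waff (l : List X) (u : X → ℝ) (k : ℕ) : ℝ := (aval u l k - aval u l (k+1)) * (k+1)

/-- affine formula for second-level values -/
def gval (l : List X) (r : List ℕ) (u : X → ℝ) (j : ℕ) : ℝ :=
  if h : j < r.length then waff l u (r.get ⟨j, h⟩) else 0

/-- the double-sorting region -/
def Rg (τ : Finset X) (l : List X) (r : List ℕ) : Set (simplexSet τ) :=
  {u | (∀ a b : Fin l.length, a ≤ b → u.1 (l.get b) ≤ u.1 (l.get a)) ∧
       (∀ a b : Fin r.length, a ≤ b → waff l u.1 (r.get b) ≤ waff l u.1 (r.get a))}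

lemma continuous_eval (τ : Finset X) (x : X) :
    Continuous (fun u : simplexSet τ => u.1 x) :=
  (continuous_apply x).comp continuous_subtype_val

lemma continuous_aval (τ : Finset X) (l : List X) (k : ℕ) :
    Continuous (fun u : simplexSet τ => aval u.1 l k) := by
  by_cases h : k < l.length
  · simp only [aval, dif_pos h]
    exact continuous_eval τ _
  · simp only [aval, dif_neg h]
    exact continuous_const

lemma continuous_waff (τ : Finset X) (l : List X) (k : ℕ) :
    Continuous (fun u : simplexSet τ => waff l u.1 k) := by
  unfold waff
  exact ((continuous_aval τ l k).sub (continuous_aval τ l (k+1))).mul continuous_const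

lemma continuous_gval (τ : Finset X) (l : List X) (r : List ℕ) (j : ℕ) :
    Continuous (fun u : simplexSet τ => gval l r u.1 j) := by
  by_cases h : j < r.length
  · simp only [gval, dif_pos h]
    exact continuous_waff τ l _
  · simp only [gval, dif_neg h]
    exact continuous_const

lemma isClosed_Rg (τ : Finset X) (l : List X) (r : List ℕ) : IsClosed (Rg τ l r) := by
  have h1 : IsClosed {u : simplexSet τ |
      ∀ a b : Fin l.length, a ≤ b → u.1 (l.get b) ≤ u.1 (l.get a)} := by
    have : {u : simplexSet τ | ∀ a b : Fin l.length, a ≤ b → u.1 (l.get b) ≤ u.1 (l.get a)}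
        = ⋂ (a : Fin l.length), ⋂ (b : Fin l.length),
          {u : simplexSet τ | a ≤ b → u.1 (l.get b) ≤ u.1 (l.get a)} := by
      ext u; simp
    rw [this]
    refine isClosed_iInter (fun a => isClosed_iInter (fun b => ?_))
    by_cases hab : a ≤ b
    · have : {u : simplexSet τ | a ≤ b → u.1 (l.get b) ≤ u.1 (l.get a)}
          = {u : simplexSet τ | u.1 (l.get b) ≤ u.1 (l.get a)} := by
        ext u; simp [hab]
      rw [this]
      exact isClosed_le (continuous_eval τ _) (continuous_eval τ _)
    · have : {u : simplexSet τ | a ≤ b → u.1 (l.get b) ≤ u.1 (l.get a)} = Set.univ := by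
        ext u; simp [hab]
      rw [this]
      exact isClosed_univ
  have h2 : IsClosed {u : simplexSet τ |
      ∀ a b : Fin r.length, a ≤ b → waff l u.1 (r.get b) ≤ waff l u.1 (r.get a)} := by
    have : {u : simplexSet τ |
        ∀ a b : Fin r.length, a ≤ b → waff l u.1 (r.get b) ≤ waff l u.1 (r.get a)}
        = ⋂ (a : Fin r.length), ⋂ (b : Fin r.length),
          {u : simplexSet τ | a ≤ b → waff l u.1 (r.get b) ≤ waff l u.1 (r.get a)} := by
      ext u; simp
    rw [this]
    refine isClosed_iInter (fun a => isClosed_iInter (fun b => ?_))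
    by_cases hab : a ≤ b
    · have : {u : simplexSet τ | a ≤ b → waff l u.1 (r.get b) ≤ waff l u.1 (r.get a)}
          = {u : simplexSet τ | waff l u.1 (r.get b) ≤ waff l u.1 (r.get a)} := by
        ext u; simp [hab]
      rw [this]
      exact isClosed_le (continuous_waff τ l _) (continuous_waff τ l _)
    · have : {u : simplexSet τ | a ≤ b → waff l u.1 (r.get b) ≤ waff l u.1 (r.get a)}
          = Set.univ := by
        ext u; simp [hab]
      rw [this]
      exact isClosed_univ
  exact h1.inter h2

lemma perm_toFinset_eq {τ : Finset X} {l : List X} (h : l.Perm τ.toList) :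
    l.toFinset = τ := by
  ext x
  rw [List.mem_toFinset, h.mem_iff, Finset.mem_toList]

lemma sorted_of_region {l : List X} {u : X → ℝ}
    (h : ∀ a b : Fin l.length, a ≤ b → u (l.get b) ≤ u (l.get a)) :
    l.Pairwise (fun a b => u b ≤ u a) :=
  List.pairwise_iff_get.mpr (fun a b hab => h a b (le_of_lt hab))

/-- covering of the simplex by regions -/
lemma exists_region (τ : Finset X) (u : simplexSet τ) :
    ∃ (l : List X) (r : List ℕ), l.Perm τ.toList ∧ r.Perm (List.range τ.card) ∧
      u ∈ Rg τ l r := by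
  obtain ⟨l, hperm, hsrt⟩ := exists_sorted_perm u.1 τ.toList
  obtain ⟨r, hperm2, hsrt2⟩ := exists_sorted_perm (fun k => waff l u.1 k)
    (List.range τ.card)
  refine ⟨l, r, hperm, hperm2, ?_, ?_⟩
  · intro a b hab
    rcases eq_or_lt_of_le hab with heq | hlt
    · cases heq; exact le_refl _
    · exact List.pairwise_iff_get.mp hsrt a b hlt
  · intro a b hab
    rcases eq_or_lt_of_le hab with heq | hlt
    · cases heq; exact le_refl _
    · exact List.pairwise_iff_get.mp hsrt2 a b hlt

/-- Bridge, level 1: on a region, `lsum` is given by the affine formula. -/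
lemma bridge1 {τ : Finset X} {u : X → ℝ} (hu : u ∈ simplexSet τ)
    {l : List X} (hperm : l.Perm τ.toList)
    (hsrt1 : ∀ a b : Fin l.length, a ≤ b → u (l.get b) ≤ u (l.get a))
    (φ : Finset X → ℝ) :
    lsum u φ = ∑ j ∈ Finset.range l.length, waff l u j * φ ((l.take (j+1)).toFinset) := by
  have hnd : l.Nodup := (hperm.nodup_iff).mpr (Finset.nodup_toList τ)
  have hsupp : Function.support u ⊆ ↑l.toFinset := by
    rw [perm_toFinset_eq hperm]
    intro x hx
    by_contra hc
    exact hx (hu.1 x hc)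
  exact lsum_eq hsupp (sorted_of_region hsrt1) hnd hu.2.1 φ

/-- Bridge, level 2: on a region, second-level `lsum` is given by the affine formula. -/
lemma bridge2 {τ : Finset X} {u : X → ℝ} (hu : u ∈ simplexSet τ)
    {l : List X} (hperm : l.Perm τ.toList)
    (hsrt1 : ∀ a b : Fin l.length, a ≤ b → u (l.get b) ≤ u (l.get a))
    {r : List ℕ} (hperm2 : r.Perm (List.range τ.card))
    (hsrt2 : ∀ a b : Fin r.length, a ≤ b → waff l u (r.get b) ≤ waff l u (r.get a))
    (ψ : Finset (Finset X) → ℝ) :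
    lsum (wgt u) ψ = ∑ j ∈ Finset.range r.length,
      ((gval l r u j - gval l r u (j+1)) * (j+1)) *
        ψ (((r.take (j+1)).map (fun k => (l.take (k+1)).toFinset)).toFinset) := by
  have hnd : l.Nodup := (hperm.nodup_iff).mpr (Finset.nodup_toList τ)
  have h0 : ∀ x, 0 ≤ u x := hu.2.1
  have hsupp : Function.support u ⊆ ↑l.toFinset := by
    rw [perm_toFinset_eq hperm]
    intro x hx
    by_contra hc
    exact hx (hu.1 x hc)
  have hf : (Function.support u).Finite := Set.Finite.subset l.toFinset.finite_toSet hsupp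
  have hsrt1' := sorted_of_region hsrt1
  have hlen : l.length = τ.card := by rw [hperm.length_eq, Finset.length_toList]
  have hrmem : ∀ k ∈ r, k < l.length := by
    intro k hk
    rw [hlen]
    exact List.mem_range.mp (hperm2.subset hk)
  have hnd2 : r.Nodup := (hperm2.nodup_iff).mpr (List.nodup_range)
  set pf : ℕ → Finset X := fun k => (l.take (k+1)).toFinset with hpf
  set l₂ : List (Finset X) := r.map pf with hl₂
  have hpf_apply : ∀ k, pf k = (l.take (k+1)).toFinset := fun k => rfl
  have hlen₂ : l₂.length = r.length := List.length_map _
  have hl₂nd : l₂.Nodup := by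
    apply List.Nodup.map_on _ hnd2
    intro k hk k' hk' hkk
    have h1 := card_take_toFinset hnd (hrmem k hk)
    have h2 := card_take_toFinset hnd (hrmem k' hk')
    have h3 : k + 1 = k' + 1 := by
      rw [← h1, ← h2]
      exact congrArg Finset.card hkk
    omega
  have hwgt_pf : ∀ k, k < l.length → wgt u (pf k) = waff l u k := fun k hk =>
    wgt_take hsupp hsrt1' hnd h0 hk
  have hsupp₂ : ∀ σ, σ ∈ Function.support (wgt u) → σ ∈ l₂ := by
    intro σ hσ
    have hσlev : σ ∈ levels u := by
      by_contra hc
      exact hσ (wgt_eq_zero hc)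
    obtain ⟨h1, h2, h3⟩ := level_eq_take hsupp hsrt1' hnd h0 hσlev
    have hk : σ.card - 1 ∈ r := by
      rw [hperm2.mem_iff, List.mem_range, ← hlen]
      omega
    rw [hl₂, List.mem_map]
    refine ⟨σ.card - 1, hk, ?_⟩
    show (l.take (σ.card - 1 + 1)).toFinset = σ
    rw [show σ.card - 1 + 1 = σ.card by omega]
    exact h1.symm
  have hsrt₂ : l₂.Pairwise (fun a b => wgt u b ≤ wgt u a) := by
    refine List.pairwise_iff_get.mpr (fun a b hab => ?_)
    have ha2 : (a.1 : ℕ) < r.length := lt_of_lt_of_le a.2 (le_of_eq hlen₂)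
    have hb2 : (b.1 : ℕ) < r.length := lt_of_lt_of_le b.2 (le_of_eq hlen₂)
    have hga : l₂.get a = pf (r.get ⟨a.1, ha2⟩) := List.getElem_map pf
    have hgb : l₂.get b = pf (r.get ⟨b.1, hb2⟩) := List.getElem_map pf
    rw [hga, hgb, hwgt_pf _ (hrmem _ (List.get_mem r _)),
      hwgt_pf _ (hrmem _ (List.get_mem r _))]
    exact hsrt2 ⟨a.1, ha2⟩ ⟨b.1, hb2⟩ (le_of_lt hab)
  have haval : ∀ j, aval (wgt u) l₂ j = gval l r u j := by
    intro j
    by_cases hj : j < r.length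
    · have hj₂ : j < l₂.length := by rw [hlen₂]; exact hj
      rw [aval_of_lt hj₂]
      have hget : l₂.get ⟨j, hj₂⟩ = pf (r.get ⟨j, hj⟩) := List.getElem_map pf
      rw [hget, hwgt_pf _ (hrmem _ (List.get_mem r ⟨j, hj⟩))]
      simp only [gval]
      rw [dif_pos hj]
    · have hj₂ : ¬ j < l₂.length := by rw [hlen₂]; exact hj
      rw [aval_of_ge hj₂]
      simp only [gval]
      rw [dif_neg hj]
  have hmain := lsum_eq (q := wgt u) (l := l₂)
    (by intro σ hσ
        exact mem_coe_toFinset' (hsupp₂ σ hσ))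
    hsrt₂ hl₂nd (wgt_nonneg hf h0) ψ
  rw [hmain]
  refine Finset.sum_congr (by rw [hlen₂]) (fun j hj => ?_)
  rw [haval j, haval (j+1)]
  congr 1
  have h1 : l₂.take (j+1) = (r.take (j+1)).map pf := by
    rw [hl₂, List.map_take]
  exact congrArg ψ (by rw [h1]; exact toFinset_indep _ _ _)

/-- index type for the regions -/
def RgIdx (τ : Finset X) : Type _ :=
  {x : List X × List ℕ // x.1 ∈ τ.toList.permutations ∧ x.2 ∈ (List.range τ.card).permutations}

instance RgIdx_finite (τ : Finset X) : Finite (RgIdx τ) := by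
  have hfin : Set.Finite {x : List X × List ℕ |
      x.1 ∈ τ.toList.permutations ∧ x.2 ∈ (List.range τ.card).permutations} := by
    apply Set.Finite.subset ((τ.toList.permutations.finite_toSet).prod
      ((List.range τ.card).permutations.finite_toSet))
    intro x hx
    exact ⟨hx.1, hx.2⟩
  exact hfin.to_subtype

lemma continuous_of_regions (τ : Finset X) {Z : Type*} [TopologicalSpace Z]
    (f : simplexSet τ → Z)
    (h : ∀ (l : List X) (r : List ℕ), l.Perm τ.toList → r.Perm (List.range τ.card) →
      ContinuousOn f (Rg τ l r)) : Continuous f := by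
  apply continuous_of_finite_closed_cover f (fun i : RgIdx τ => Rg τ i.1.1 i.1.2)
  · rw [Set.eq_univ_iff_forall]
    intro u
    obtain ⟨l, r, hp, hp2, hmem⟩ := exists_region τ u
    exact Set.mem_iUnion.mpr ⟨⟨(l, r), List.mem_permutations.mpr hp,
      List.mem_permutations.mpr hp2⟩, hmem⟩
  · intro i
    exact isClosed_Rg τ i.1.1 i.1.2
  · intro i
    exact h i.1.1 i.1.2 (List.mem_permutations.mp i.2.1) (List.mem_permutations.mp i.2.2)

lemma continuous_lsum1 (τ : Finset X) (φ : Finset X → ℝ) :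
    Continuous (fun u : simplexSet τ => lsum u.1 φ) := by
  apply continuous_of_regions
  intro l r hp hp2
  have hcont : Continuous (fun u : simplexSet τ =>
      ∑ j ∈ Finset.range l.length, waff l u.1 j * φ ((l.take (j+1)).toFinset)) := by
    apply continuous_finset_sum
    intro j _
    exact (continuous_waff τ l j).mul continuous_const
  exact hcont.continuousOn.congr (fun u hu => bridge1 u.2 hp hu.1 φ)

lemma continuous_lsum2 (τ : Finset X) (ψ : Finset (Finset X) → ℝ) :
    Continuous (fun u : simplexSet τ => lsum (wgt u.1) ψ) := by
  apply continuous_of_regions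
  intro l r hp hp2
  have hcont : Continuous (fun u : simplexSet τ =>
      ∑ j ∈ Finset.range r.length, ((gval l r u.1 j - gval l r u.1 (j+1)) * (j+1)) *
        ψ (((r.take (j+1)).map (fun k => (l.take (k+1)).toFinset)).toFinset)) := by
    apply continuous_finset_sum
    intro j _
    exact (((continuous_gval τ l r j).sub (continuous_gval τ l r (j+1))).mul
      continuous_const).mul continuous_const
  exact hcont.continuousOn.congr (fun u hu => bridge2 u.2 hp hu.1 hp2 hu.2 ψ)

end regions

section ambientmaps

variable {X Y : Type*} [Nonempty X] [Nonempty Y] (R : Set (X × Y))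

lemma continuous_ambient_PhiFun (τ : Finset X) :
    Continuous (fun u : simplexSet τ => PhiFun R u.1) :=
  continuous_pi (fun y => continuous_lsum1 τ _)

lemma continuous_ambient_PhiTFun (τ : Finset X) :
    Continuous (fun u : simplexSet τ => PhiTFun R u.1) :=
  continuous_pi (fun y => continuous_lsum2 τ _)

lemma continuous_ambient_IFun (τ : Finset X) :
    Continuous (fun u : simplexSet τ => IFun u.1) :=
  continuous_pi (fun x => continuous_lsum2 τ _)

end ambientmaps

section package

variable {X Y : Type*} [Nonempty X] [Nonempty Y] (R : Set (X × Y))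

lemma levels_subset_powersetE {τ : Finset X} {u : X → ℝ} (hu : u ∈ simplexSet τ)
    {σ : Finset X} (hσ : σ ∈ levels u) : σ ∈ τ.powerset.erase ∅ := by
  have hpt := IsPt.of_simplexSet hu
  rw [Finset.mem_erase, Finset.mem_powerset]
  exact ⟨Finset.nonempty_iff_ne_empty.mp (levels_nonempty_mem hσ),
    (levels_subset_supp hσ).trans (hpt.suppF_subset hu)⟩

/-- finite subcomplex of `dowkerF R` receiving all images from `simplexSet τ` -/
noncomputable def Tfin1 (τ : Finset X) : Finset (Finset Y) :=
  (((τ.powerset.erase ∅).image (gch R)).powerset).filter (· ∈ dowkerF R)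

lemma Gstar_subset_big {τ : Finset X} {u : X → ℝ} (hu : u ∈ simplexSet τ) :
    Gstar R u ⊆ (τ.powerset.erase ∅).image (gch R) := by
  intro y hy
  obtain ⟨σ, hσ, rfl⟩ := Finset.mem_image.mp hy
  exact Finset.mem_image_of_mem _ (levels_subset_powersetE hu hσ)

lemma Gstar_mem_Tfin1 {τ : Finset X} (hτ : τ ∈ dowkerE R) {u : X → ℝ}
    (hu : u ∈ simplexSet τ) : Gstar R u ∈ Tfin1 R τ := by
  have hpt := IsPt.of_simplexSet hu
  have hE : suppF u ∈ dowkerE R := dowkerE_down hτ (hpt.suppF_subset hu) hpt.supp_ne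
  rw [Tfin1, Finset.mem_filter, Finset.mem_powerset]
  exact ⟨Gstar_subset_big R hu, Gstar_mem R hpt hE⟩

/-- `Φ` as a continuous map of realizations. -/
noncomputable def PhiC : C(Realization (dowkerE R), Realization (dowkerE (trr R))) where
  toFun := fun p => ⟨PhiFun R p.1, Gstar R p.1,
    Gstar_mem R (realization_isPt p.2) (suppF_mem_dowker R p.2),
    PhiFun_mem R (realization_isPt p.2)⟩
  continuous_toFun := by
    apply continuous_from_realization
    intro σ hσ
    apply continuous_into_realization _ (continuous_ambient_PhiFun R σ) (Tfin1 R σ)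
      (fun ρ hρ => (Finset.mem_filter.mp hρ).2)
    intro u
    exact ⟨Gstar R u.1, Gstar_mem_Tfin1 R hσ u.2, PhiFun_mem R (realization_isPt
      (⟨σ, hσ, u.2⟩ : u.1 ∈ realizationSet (dowkerE R)))⟩

/-- `Φ̃` as a continuous map of realizations. -/
noncomputable def PhiTC : C(Realization (dowkerE R), Realization (dowkerE (trr R))) where
  toFun := fun p => ⟨PhiTFun R p.1, Gstar R p.1,
    Gstar_mem R (realization_isPt p.2) (suppF_mem_dowker R p.2),
    PhiTFun_mem R (realization_isPt p.2)⟩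
  continuous_toFun := by
    apply continuous_from_realization
    intro σ hσ
    apply continuous_into_realization _ (continuous_ambient_PhiTFun R σ) (Tfin1 R σ)
      (fun ρ hρ => (Finset.mem_filter.mp hρ).2)
    intro u
    exact ⟨Gstar R u.1, Gstar_mem_Tfin1 R hσ u.2, PhiTFun_mem R (realization_isPt
      (⟨σ, hσ, u.2⟩ : u.1 ∈ realizationSet (dowkerE R)))⟩

/-- `I` as a continuous map of realizations. -/
noncomputable def IC : C(Realization (dowkerE R), Realization (dowkerE R)) where
  toFun := fun p => ⟨IFun p.1, suppF p.1, suppF_mem_dowker R p.2,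
    simplexSet_mono (Astar_subset (realization_isPt p.2)) (IFun_mem (realization_isPt p.2))⟩
  continuous_toFun := by
    apply continuous_from_realization
    intro σ hσ
    apply continuous_into_realization _ (continuous_ambient_IFun σ)
      (σ.powerset.filter (· ∈ dowkerE R)) (fun ρ hρ => (Finset.mem_filter.mp hρ).2)
    intro u
    have hpt := realization_isPt (⟨σ, hσ, u.2⟩ : u.1 ∈ realizationSet (dowkerE R))
    refine ⟨suppF u.1, ?_, simplexSet_mono (Astar_subset hpt) (IFun_mem hpt)⟩
    rw [Finset.mem_filter, Finset.mem_powerset]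
    exact ⟨hpt.suppF_subset u.2, dowkerE_down hσ (hpt.suppF_subset u.2) hpt.supp_ne⟩

/-- the underlying map of the first homotopy: the segment from `Φ` to `Φ̃`. -/
noncomputable def H1fun : unitInterval × Realization (dowkerE R) → Realization (dowkerE (trr R)) :=
  fun z => ⟨fun y => (1 - z.1.1) * PhiFun R z.2.1 y + z.1.1 * PhiTFun R z.2.1 y,
    Gstar R z.2.1,
    Gstar_mem R (realization_isPt z.2.2) (suppF_mem_dowker R z.2.2),
    simplexSet_convex (PhiFun_mem R (realization_isPt z.2.2))
      (PhiTFun_mem R (realization_isPt z.2.2)) z.1.2.1 z.1.2.2⟩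

lemma H1fun_continuous : Continuous (H1fun R) := by
  apply continuous_homotopy_from_realization
  intro σ hσ
  apply continuous_into_realization _ ?amb (Tfin1 R σ)
    (fun ρ hρ => (Finset.mem_filter.mp hρ).2)
  case amb =>
    apply continuous_pi
    intro y
    have ht : Continuous (fun z : simplexSet σ × unitInterval => (z.2.1 : ℝ)) :=
      continuous_subtype_val.comp continuous_snd
    have h1 : Continuous (fun z : simplexSet σ × unitInterval => PhiFun R z.1.1 y) :=
      ((continuous_apply y).comp (continuous_ambient_PhiFun R σ)).comp continuous_fst
    have h2 : Continuous (fun z : simplexSet σ × unitInterval => PhiTFun R z.1.1 y) :=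
      ((continuous_apply y).comp (continuous_ambient_PhiTFun R σ)).comp continuous_fst
    exact ((continuous_const.sub ht).mul h1).add (ht.mul h2)
  intro z
  refine ⟨Gstar R z.1.1, Gstar_mem_Tfin1 R hσ z.1.2, ?_⟩
  have hpt := realization_isPt (⟨σ, hσ, z.1.2⟩ : z.1.1 ∈ realizationSet (dowkerE R))
  exact simplexSet_convex (PhiFun_mem R hpt) (PhiTFun_mem R hpt) z.2.2.1 z.2.2.2

/-- First homotopy: `Ψ ∘ Φ ≃ Ψ ∘ Φ̃`. -/
noncomputable def H1 : ContinuousMap.Homotopy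
    ((PhiC (trr R)).comp (PhiC R)) ((PhiC (trr R)).comp (PhiTC R)) where
  toFun := fun z => PhiC (trr R) (H1fun R z)
  continuous_toFun := (PhiC (trr R)).continuous.comp (H1fun_continuous R)
  map_zero_left := by
    intro p
    apply congrArg (PhiC (trr R))
    apply Subtype.ext
    funext y
    show (1 - (0:unitInterval).1) * _ + (0:unitInterval).1 * _ = _
    norm_num
    rfl
  map_one_left := by
    intro p
    apply congrArg (PhiC (trr R))
    apply Subtype.ext
    funext y
    show (1 - (1:unitInterval).1) * _ + (1:unitInterval).1 * _ = _
    norm_num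
    rfl

/-- the big finite subcomplex for the middle homotopy -/
noncomputable def Tfin2 (τ : Finset X) : Finset (Finset X) :=
  (((((((τ.powerset.erase ∅).image (gch R)).powerset.erase ∅)).image (gch (trr R)))
    ∪ τ).powerset).filter (· ∈ dowkerE R)

lemma Dstar_mem_Tfin2 {τ : Finset X} (hτ : τ ∈ dowkerE R) {u : X → ℝ}
    (hu : u ∈ simplexSet τ) : Dstar R u ∈ Tfin2 R τ := by
  have hpt := IsPt.of_simplexSet hu
  have hE : suppF u ∈ dowkerE R := dowkerE_down hτ (hpt.suppF_subset hu) hpt.supp_ne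
  rw [Tfin2, Finset.mem_filter, Finset.mem_powerset]
  constructor
  · rw [Dstar]
    apply Finset.union_subset
    · apply Finset.Subset.trans (Finset.image_subset_image _)
        (Finset.subset_union_left)
      intro T hT
      rw [Finset.mem_erase, Finset.mem_powerset]
      have hPt : IsPt (PhiTFun R u) := IsPt.of_simplexSet (PhiTFun_mem R hpt)
      refine ⟨Finset.nonempty_iff_ne_empty.mp (levels_nonempty_mem hT), ?_⟩
      exact ((levels_subset_supp hT).trans (hPt.suppF_subset (PhiTFun_mem R hpt))).trans
        (Gstar_subset_big R hu)
    · exact (Astar_subset hpt).trans ((hpt.suppF_subset hu).trans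
        Finset.subset_union_right)
  · exact Dstar_mem R hpt hE

/-- the underlying map of the middle homotopy: the segment from `Ψ∘Φ̃` to `I`. -/
noncomputable def H2fun : unitInterval × Realization (dowkerE R) → Realization (dowkerE R) :=
  fun z => ⟨fun x => (1 - z.1.1) * PhiFun (trr R) (PhiTFun R z.2.1) x + z.1.1 * IFun z.2.1 x,
    Dstar R z.2.1,
    Dstar_mem R (realization_isPt z.2.2) (suppF_mem_dowker R z.2.2),
    simplexSet_convex
      (simplexSet_mono Finset.subset_union_left (MFun_mem R (realization_isPt z.2.2)))
      (simplexSet_mono Finset.subset_union_right (IFun_mem (realization_isPt z.2.2)))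
      z.1.2.1 z.1.2.2⟩

lemma H2fun_continuous : Continuous (H2fun R) := by
  apply continuous_homotopy_from_realization
  intro σ hσ
  apply continuous_into_realization _ ?amb (Tfin2 R σ)
    (fun ρ hρ => (Finset.mem_filter.mp hρ).2)
  case amb =>
    apply continuous_pi
    intro x
    have ht : Continuous (fun z : simplexSet σ × unitInterval => (z.2.1 : ℝ)) :=
      continuous_subtype_val.comp continuous_snd
    have hM : Continuous (fun u : simplexSet σ => PhiFun (trr R) (PhiTFun R u.1)) := by
      have h1 : Continuous (fun u : simplexSet σ =>
          (PhiC (trr R)) ((PhiTC R) (toReal σ hσ u))) :=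
        (PhiC (trr R)).continuous.comp ((PhiTC R).continuous.comp (toReal σ hσ).continuous)
      exact continuous_val_realization.comp h1
    have h1 : Continuous (fun z : simplexSet σ × unitInterval =>
        PhiFun (trr R) (PhiTFun R z.1.1) x) :=
      ((continuous_apply x).comp hM).comp continuous_fst
    have h2 : Continuous (fun z : simplexSet σ × unitInterval => IFun z.1.1 x) :=
      ((continuous_apply x).comp (continuous_ambient_IFun σ)).comp continuous_fst
    exact ((continuous_const.sub ht).mul h1).add (ht.mul h2)
  intro z
  have hpt := realization_isPt (⟨σ, hσ, z.1.2⟩ : z.1.1 ∈ realizationSet (dowkerE R))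
  refine ⟨Dstar R z.1.1, Dstar_mem_Tfin2 R hσ z.1.2, ?_⟩
  exact simplexSet_convex
    (simplexSet_mono Finset.subset_union_left (MFun_mem R hpt))
    (simplexSet_mono Finset.subset_union_right (IFun_mem hpt)) z.2.2.1 z.2.2.2

/-- Second homotopy: `Ψ ∘ Φ̃ ≃ I`. -/
noncomputable def H2 : ContinuousMap.Homotopy
    ((PhiC (trr R)).comp (PhiTC R)) (IC R) where
  toFun := H2fun R
  continuous_toFun := H2fun_continuous R
  map_zero_left := by
    intro p
    apply Subtype.ext
    funext x
    show (1 - (0:unitInterval).1) * _ + (0:unitInterval).1 * _ = _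
    norm_num
    rfl
  map_one_left := by
    intro p
    apply Subtype.ext
    funext x
    show (1 - (1:unitInterval).1) * _ + (1:unitInterval).1 * _ = _
    norm_num
    rfl

/-- the underlying map of the last homotopy: the segment from `I` to `id`. -/
noncomputable def H3fun : unitInterval × Realization (dowkerE R) → Realization (dowkerE R) :=
  fun z => ⟨fun x => (1 - z.1.1) * IFun z.2.1 x + z.1.1 * z.2.1 x,
    suppF z.2.1, suppF_mem_dowker R z.2.2,
    simplexSet_convex
      (simplexSet_mono (Astar_subset (realization_isPt z.2.2))
        (IFun_mem (realization_isPt z.2.2)))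
      ((realization_isPt z.2.2).mem_simplex_supp) z.1.2.1 z.1.2.2⟩

lemma H3fun_continuous : Continuous (H3fun R) := by
  apply continuous_homotopy_from_realization
  intro σ hσ
  apply continuous_into_realization _ ?amb (σ.powerset.filter (· ∈ dowkerE R))
    (fun ρ hρ => (Finset.mem_filter.mp hρ).2)
  case amb =>
    apply continuous_pi
    intro x
    have ht : Continuous (fun z : simplexSet σ × unitInterval => (z.2.1 : ℝ)) :=
      continuous_subtype_val.comp continuous_snd
    have h1 : Continuous (fun z : simplexSet σ × unitInterval => IFun z.1.1 x) :=
      ((continuous_apply x).comp (continuous_ambient_IFun σ)).comp continuous_fst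
    have h2 : Continuous (fun z : simplexSet σ × unitInterval => z.1.1 x) :=
      ((continuous_apply x).comp continuous_subtype_val).comp continuous_fst
    exact ((continuous_const.sub ht).mul h1).add (ht.mul h2)
  intro z
  have hpt := realization_isPt (⟨σ, hσ, z.1.2⟩ : z.1.1 ∈ realizationSet (dowkerE R))
  refine ⟨suppF z.1.1, ?_, ?_⟩
  · rw [Finset.mem_filter, Finset.mem_powerset]
    exact ⟨hpt.suppF_subset z.1.2, dowkerE_down hσ (hpt.suppF_subset z.1.2) hpt.supp_ne⟩
  · exact simplexSet_convex
      (simplexSet_mono (Astar_subset hpt) (IFun_mem hpt))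
      (hpt.mem_simplex_supp) z.2.2.1 z.2.2.2

/-- Third homotopy: `I ≃ id`. -/
noncomputable def H3 : ContinuousMap.Homotopy (IC R) (ContinuousMap.id _) where
  toFun := H3fun R
  continuous_toFun := H3fun_continuous R
  map_zero_left := by
    intro p
    apply Subtype.ext
    funext x
    show (1 - (0:unitInterval).1) * _ + (0:unitInterval).1 * _ = _
    norm_num
    rfl
  map_one_left := by
    intro p
    apply Subtype.ext
    funext x
    show (1 - (1:unitInterval).1) * _ + (1:unitInterval).1 * _ = _
    norm_num

/-- The composite homotopy `Ψ ∘ Φ ≃ id`. -/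
noncomputable def mainHomotopy : ContinuousMap.Homotopy
    ((PhiC (trr R)).comp (PhiC R)) (ContinuousMap.id _) :=
  ((H1 R).trans (H2 R)).trans (H3 R)

end package

theorem strong_dowker_theorem' {X Y : Type*} (R : Set (X × Y)) (hR : R.Nonempty) :
    Nonempty (ContinuousMap.HomotopyEquiv (Realization (dowkerE R))
      (Realization (dowkerF R))) := by
  obtain ⟨⟨x0, yy0⟩, hxy⟩ := hR
  haveI : Nonempty X := ⟨x0⟩
  haveI : Nonempty Y := ⟨yy0⟩
  exact ⟨⟨PhiC R, PhiC (trr R), ⟨mainHomotopy R⟩, ⟨mainHomotopy (trr R)⟩⟩⟩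

end

/-- **The strong form of Dowker's theorem.** For any nonempty relation `R ⊆ X × Y`, the
geometric realizations of the Dowker complexes `E_R` and `F_R` are homotopy equivalent. -/
theorem strong_dowker_theorem {X Y : Type*} (R : Set (X × Y)) (hR : R.Nonempty) :
    Nonempty (ContinuousMap.HomotopyEquiv (Realization (dowkerE R)) (Realization (dowkerF R))) := by
  exact strong_dowker_theorem' R hR
end

section
/- Let X, Y be sets and let R ⊆ R' ⊆ X × Y be nonempty relations, with associated Dowker complexes E_R ⊆ E_{R'} (on vertex set X) and F_R ⊆ F_{R'} (on vertex set Y). Then there exist homotopy equivalences Γ : |F_R| → |E_R| and Γ' : |F_{R'}| → |E_{R'}| such that |ι_E| ∘ Γ is homotopic to Γ' ∘ |ι_F|, where ι_E : E_R ↪ E_{R'} and ι_F : F_R ↪ F_{R'} are the canonical inclusions. -/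
lemma dowkerE_mono {X Y : Type*} {R R' : Set (X × Y)} (h : R ⊆ R') :
    dowkerE R ⊆ dowkerE R' := by
  rintro σ ⟨hne, y, hy⟩
  exact ⟨hne, y, fun x hx => h (hy x hx)⟩

lemma dowkerF_mono {X Y : Type*} {R R' : Set (X × Y)} (h : R ⊆ R') :
    dowkerF R ⊆ dowkerF R' := by
  rintro τ ⟨hne, x, hx⟩
  exact ⟨hne, x, fun y hy => h (hx y hy)⟩

namespace Dowker

open Function Finset

variable {V : Type*} {W : Type*} {U : Type*}

lemma simplexSet_mono {σ τ : Finset V} (h : σ ⊆ τ) : simplexSet σ ⊆ simplexSet τ := by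
  rintro f ⟨h0, hpos, hsum⟩
  refine ⟨fun v hv => h0 v (fun hvσ => hv (h hvσ)), hpos, ?_⟩
  rw [← hsum]
  exact (Finset.sum_subset h (fun x _ hx => h0 x hx)).symm

/-- The canonical map from a closed simplex into the realization. -/
def ins {K : Set (Finset V)} {σ : Finset V} (hσ : σ ∈ K) : simplexSet σ → Realization K :=
  fun f => ⟨f.1, σ, hσ, f.2⟩

lemma continuous_ins {K : Set (Finset V)} {σ : Finset V} (hσ : σ ∈ K) :
    Continuous (ins hσ) := by
  rw [continuous_iff_coinduced_le]
  exact le_iSup (fun τ : {σ : Finset V // σ ∈ K} =>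
    TopologicalSpace.coinduced
      (fun f : simplexSet τ.1 => (⟨f.1, τ.1, τ.2, f.2⟩ : Realization K))
      inferInstance) ⟨σ, hσ⟩

lemma continuous_out {K : Set (Finset V)} {Z : Type*} [TopologicalSpace Z]
    {f : Realization K → Z}
    (h : ∀ (σ : Finset V) (hσ : σ ∈ K), Continuous (f ∘ ins hσ)) : Continuous f := by
  refine continuous_iSup_dom.mpr fun σ => continuous_coinduced_dom.mpr (h σ.1 σ.2)

lemma continuous_val {K : Set (Finset V)} :
    Continuous (fun p : Realization K => p.1) :=
  continuous_out fun _ _ => continuous_subtype_val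

instance realizationT2 {K : Set (Finset V)} : T2Space (Realization K) := by
  refine ⟨fun a b hab => ?_⟩
  have hval : a.1 ≠ b.1 := fun h => hab (Subtype.ext h)
  obtain ⟨u, v, hu, hv, hau, hbv, huv⟩ := t2_separation hval
  exact ⟨_, _, hu.preimage continuous_val, hv.preimage continuous_val, hau, hbv,
    huv.preimage _⟩

lemma isClosed_simplexSet (σ : Finset V) : IsClosed (simplexSet σ) := by
  have h1 : IsClosed {f : V → ℝ | ∀ v, v ∉ σ → f v = 0} := by
    rw [show {f : V → ℝ | ∀ v, v ∉ σ → f v = 0} = ⋂ v, ⋂ _ : v ∉ σ, {f | f v = 0} by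
      ext f; simp [Set.mem_iInter]]
    exact isClosed_iInter fun v => isClosed_iInter fun _ =>
      isClosed_eq (continuous_apply v) continuous_const
  have h2 : IsClosed {f : V → ℝ | ∀ v, 0 ≤ f v} := by
    rw [show {f : V → ℝ | ∀ v, 0 ≤ f v} = ⋂ v, {f | 0 ≤ f v} by ext f; simp [Set.mem_iInter]]
    exact isClosed_iInter fun v => isClosed_le continuous_const (continuous_apply v)
  have h3 : IsClosed {f : V → ℝ | ∑ v ∈ σ, f v = 1} :=
    isClosed_eq (by exact continuous_finset_sum σ fun v _ => continuous_apply v) continuous_const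
  have : simplexSet σ = {f : V → ℝ | ∀ v, v ∉ σ → f v = 0} ∩
      ({f : V → ℝ | ∀ v, 0 ≤ f v} ∩ {f : V → ℝ | ∑ v ∈ σ, f v = 1}) := by
    ext f; exact ⟨fun ⟨a,b,c⟩ => ⟨a,b,c⟩, fun ⟨a,b,c⟩ => ⟨a,b,c⟩⟩
  rw [this]
  exact h1.inter (h2.inter h3)

lemma isCompact_simplexSet (σ : Finset V) : IsCompact (simplexSet σ) := by
  refine (isCompact_univ_pi (fun v : V => isCompact_Icc (a := (0:ℝ)) (b := 1))).of_isClosed_subset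
    (isClosed_simplexSet σ) ?_
  rintro f ⟨h0, hpos, hsum⟩ v _
  refine ⟨hpos v, ?_⟩
  by_cases hv : v ∈ σ
  · rw [← hsum]
    exact Finset.single_le_sum (fun w _ => hpos w) hv
  · rw [h0 v hv]; exact zero_le_one

lemma compactSpace_realization {K : Set (Finset V)} (hfin : K.Finite) :
    CompactSpace (Realization K) := by
  haveI : Finite {σ : Finset V // σ ∈ K} := hfin
  constructor
  have : (Set.univ : Set (Realization K)) =
      ⋃ σ : {σ : Finset V // σ ∈ K}, Set.range (ins σ.2) := by
    ext p
    simp only [Set.mem_univ, true_iff, Set.mem_iUnion, Set.mem_range]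
    obtain ⟨σ, hσ, hp⟩ := p.2
    exact ⟨⟨σ, hσ⟩, ⟨p.1, hp⟩, Subtype.ext rfl⟩
  rw [this]
  refine isCompact_iUnion fun σ => ?_
  haveI : CompactSpace (simplexSet σ.1) := isCompact_iff_compactSpace.mp (isCompact_simplexSet σ.1)
  exact isCompact_range (continuous_ins σ.2)

end Dowker
namespace Dowker

variable {V : Type*} {W : Type*} {U : Type*}

open Classical in
/-- The indicator vertex datum of a point `x`. -/
noncomputable def ind (x : V) : V → ℝ := fun v => if v = x then 1 else 0

lemma ind_mem (x : V) : ind x ∈ simplexSet {x} := by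
  classical
  refine ⟨fun v hv => ?_, fun v => ?_, ?_⟩
  · simp only [Finset.mem_singleton] at hv; simp [ind, hv]
  · unfold ind; split <;> norm_num
  · simp [ind]

/-- The affine extension of vertex data `q` to points. -/
noncomputable def affToFun (q : V → W → ℝ) (p : V → ℝ) : W → ℝ :=
  fun w => ∑ᶠ v, p v * q v w

lemma affToFun_eq_sum {q : V → W → ℝ} {p : V → ℝ} {σ : Finset V}
    (hp : ∀ v, v ∉ σ → p v = 0) (w : W) :
    affToFun q p w = ∑ v ∈ σ, p v * q v w := by
  refine finsum_eq_sum_of_support_subset _ (fun v hv => ?_)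
  by_contra hvσ
  simp only [Function.mem_support] at hv
  rw [hp v hvσ, zero_mul] at hv
  exact hv rfl

lemma affToFun_congr {q q' : V → W → ℝ} {p : V → ℝ}
    (h : ∀ v, p v ≠ 0 → q v = q' v) : affToFun q p = affToFun q' p := by
  funext w
  refine finsum_congr fun v => ?_
  by_cases hv : p v = 0
  · rw [hv, zero_mul, zero_mul]
  · rw [h v hv]

lemma affToFun_ind (q : V → W → ℝ) (x : V) :
    affToFun q (ind x) = q x := by
  classical
  funext w
  rw [affToFun_eq_sum (σ := {x}) (fun v hv => (ind_mem x).1 v hv) w]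
  simp [ind]

lemma affToFun_mem {q : V → W → ℝ} {p : V → ℝ} {σ : Finset V} {ρ : Finset W}
    (hp : p ∈ simplexSet σ) (hq : ∀ v ∈ σ, q v ∈ simplexSet ρ) :
    affToFun q p ∈ simplexSet ρ := by
  obtain ⟨h0, hpos, hsum⟩ := hp
  refine ⟨fun w hw => ?_, fun w => ?_, ?_⟩
  · rw [affToFun_eq_sum h0 w]
    exact Finset.sum_eq_zero fun v hv => by rw [(hq v hv).1 w hw, mul_zero]
  · rw [affToFun_eq_sum h0 w]
    exact Finset.sum_nonneg fun v hv => mul_nonneg (hpos v) ((hq v hv).2.1 w)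
  · have : ∀ w ∈ ρ, affToFun q p w = ∑ v ∈ σ, p v * q v w := fun w _ => affToFun_eq_sum h0 w
    rw [Finset.sum_congr rfl this, Finset.sum_comm]
    rw [← hsum]
    refine Finset.sum_congr rfl fun v hv => ?_
    rw [← Finset.mul_sum, (hq v hv).2.2, mul_one]

lemma affToFun_comp {q1 : V → W → ℝ} {q2 : W → U → ℝ} {p : V → ℝ} {σ : Finset V} {ρ : Finset W}
    (hp : ∀ v, v ∉ σ → p v = 0) (hq1 : ∀ v ∈ σ, q1 v ∈ simplexSet ρ) :
    affToFun q2 (affToFun q1 p) = affToFun (fun v => affToFun q2 (q1 v)) p := by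
  funext u
  have hsupp : ∀ w, w ∉ ρ → affToFun q1 p w = 0 := fun w hw => by
    rw [affToFun_eq_sum hp w]
    exact Finset.sum_eq_zero fun v hv => by rw [(hq1 v hv).1 w hw, mul_zero]
  rw [affToFun_eq_sum hsupp u, affToFun_eq_sum hp u]
  have : ∀ w ∈ ρ, affToFun q1 p w * q2 w u = ∑ v ∈ σ, p v * q1 v w * q2 w u := by
    intro w _
    rw [affToFun_eq_sum hp w, Finset.sum_mul]
  rw [Finset.sum_congr rfl this, Finset.sum_comm]
  refine Finset.sum_congr rfl fun v hv => ?_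
  rw [affToFun_eq_sum (σ := ρ) (hq1 v hv).1 u, Finset.mul_sum]
  exact Finset.sum_congr rfl fun w _ => by ring

lemma continuous_affToFun_apply (q : V → W → ℝ) (σ : Finset V) (w : W) :
    Continuous (fun f : simplexSet σ => affToFun q f.1 w) := by
  have : (fun f : simplexSet σ => affToFun q f.1 w) =
      fun f : simplexSet σ => ∑ v ∈ σ, f.1 v * q v w := by
    funext f; exact affToFun_eq_sum f.2.1 w
  rw [this]
  exact continuous_finset_sum σ fun v _ =>
    (((continuous_apply v).comp continuous_subtype_val).mul continuous_const)

/-- The continuous map on realizations induced by affine vertex data. -/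
noncomputable def affMap {K : Set (Finset V)} {L : Set (Finset W)} (q : V → W → ℝ)
    (hq : ∀ σ ∈ K, ∃ ρ ∈ L, ∀ v ∈ σ, q v ∈ simplexSet ρ) :
    C(Realization K, Realization L) where
  toFun p := ⟨affToFun q p.1, by
    obtain ⟨σ, hσ, hp⟩ := p.2
    obtain ⟨ρ, hρ, h⟩ := hq σ hσ
    exact ⟨ρ, hρ, affToFun_mem hp h⟩⟩
  continuous_toFun := by
    refine continuous_out fun σ hσ => ?_
    obtain ⟨ρ, hρ, h⟩ := hq σ hσ
    have hc : Continuous (fun f : simplexSet σ =>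
        (⟨affToFun q f.1, affToFun_mem f.2 h⟩ : simplexSet ρ)) := by
      refine Continuous.subtype_mk ?_ _
      exact continuous_pi fun w => continuous_affToFun_apply q σ w
    exact ((continuous_ins hρ).comp hc).congr fun f => Subtype.ext rfl

@[simp] lemma affMap_apply_val {K : Set (Finset V)} {L : Set (Finset W)} (q : V → W → ℝ)
    (hq : ∀ σ ∈ K, ∃ ρ ∈ L, ∀ v ∈ σ, q v ∈ simplexSet ρ) (p : Realization K) :
    ((affMap q hq) p).1 = affToFun q p.1 := rfl

lemma affMap_comp {K : Set (Finset V)} {L : Set (Finset W)} {M : Set (Finset U)}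
    (q1 : V → W → ℝ) (q2 : W → U → ℝ)
    (hq1 : ∀ σ ∈ K, ∃ ρ ∈ L, ∀ v ∈ σ, q1 v ∈ simplexSet ρ)
    (hq2 : ∀ ρ ∈ L, ∃ π ∈ M, ∀ w ∈ ρ, q2 w ∈ simplexSet π)
    (hq3 : ∀ σ ∈ K, ∃ π ∈ M, ∀ v ∈ σ, affToFun q2 (q1 v) ∈ simplexSet π) :
    (affMap q2 hq2).comp (affMap q1 hq1) = affMap (fun v => affToFun q2 (q1 v)) hq3 := by
  refine ContinuousMap.ext fun p => Subtype.ext ?_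
  obtain ⟨σ, hσ, hp⟩ := p.2
  obtain ⟨ρ, _, h1⟩ := hq1 σ hσ
  exact affToFun_comp hp.1 h1

end Dowker
namespace Dowker

variable {V : Type*} {W : Type*}

lemma convex_simplexSet {ρ : Finset W} {f g : W → ℝ} (hf : f ∈ simplexSet ρ)
    (hg : g ∈ simplexSet ρ) (t : ℝ) (ht0 : 0 ≤ t) (ht1 : t ≤ 1) :
    (fun w => (1 - t) * f w + t * g w) ∈ simplexSet ρ := by
  refine ⟨fun w hw => ?_, fun w => ?_, ?_⟩
  · show (1 - t) * f w + t * g w = 0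
    rw [hf.1 w hw, hg.1 w hw]; ring
  · show 0 ≤ (1 - t) * f w + t * g w
    have hfw := hf.2.1 w; have hgw := hg.2.1 w
    nlinarith
  · show ∑ w ∈ ρ, ((1 - t) * f w + t * g w) = 1
    rw [Finset.sum_add_distrib, ← Finset.mul_sum, ← Finset.mul_sum, hf.2.2, hg.2.2]; ring

/-- Two affine maps whose vertex data lie, simplex by simplex, in a common simplex of the
target are homotopic via the straight-line homotopy. -/
lemma affMap_homotopic {K : Set (Finset V)} {L : Set (Finset W)} (q q' : V → W → ℝ)
    (hq : ∀ σ ∈ K, ∃ ρ ∈ L, ∀ v ∈ σ, q v ∈ simplexSet ρ)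
    (hq' : ∀ σ ∈ K, ∃ ρ ∈ L, ∀ v ∈ σ, q' v ∈ simplexSet ρ)
    (hqq' : ∀ σ ∈ K, ∃ ρ ∈ L, ∀ v ∈ σ, q v ∈ simplexSet ρ ∧ q' v ∈ simplexSet ρ) :
    (affMap q hq).Homotopic (affMap q' hq') := by
  have hmem : ∀ (t : unitInterval) (p : Realization K),
      (fun w => (1 - t.1) * affToFun q p.1 w + t.1 * affToFun q' p.1 w) ∈ realizationSet L := by
    intro t p
    obtain ⟨σ, hσ, hp⟩ := p.2
    obtain ⟨ρ, hρ, h⟩ := hqq' σ hσ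
    exact ⟨ρ, hρ, convex_simplexSet (affToFun_mem hp fun v hv => (h v hv).1)
      (affToFun_mem hp fun v hv => (h v hv).2) t.1 t.2.1 t.2.2⟩
  set Hfun : unitInterval × Realization K → Realization L := fun x =>
    ⟨fun w => (1 - x.1.1) * affToFun q x.2.1 w + x.1.1 * affToFun q' x.2.1 w,
      hmem x.1 x.2⟩ with hHfun
  have hGp : ∀ p : Realization K, Continuous fun t : unitInterval => Hfun (t, p) := by
    intro p
    obtain ⟨σ, hσ, hp⟩ := p.2
    obtain ⟨ρ, hρ, h⟩ := hqq' σ hσ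
    have hmemρ : ∀ t : unitInterval,
        (fun w => (1 - t.1) * affToFun q p.1 w + t.1 * affToFun q' p.1 w) ∈ simplexSet ρ :=
      fun t => convex_simplexSet (affToFun_mem hp fun v hv => (h v hv).1)
        (affToFun_mem hp fun v hv => (h v hv).2) t.1 t.2.1 t.2.2
    have hc : Continuous fun t : unitInterval => ins hρ ⟨_, hmemρ t⟩ := by
      refine (continuous_ins hρ).comp (Continuous.subtype_mk ?_ _)
      refine continuous_pi fun w => ?_
      have hval : Continuous (fun t : unitInterval => t.1) := continuous_subtype_val
      exact ((continuous_const.sub hval).mul continuous_const).add (hval.mul continuous_const)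
    exact hc.congr fun t => Subtype.ext rfl
  set G : Realization K → C(unitInterval, Realization L) :=
    fun p => ⟨fun t => Hfun (t, p), hGp p⟩ with hG
  have hGcont : Continuous G := by
    refine continuous_out fun σ hσ => ?_
    obtain ⟨ρ, hρ, h⟩ := hqq' σ hσ
    have hmemρ : ∀ (x : simplexSet σ × unitInterval),
        (fun w => (1 - x.2.1) * affToFun q x.1.1 w + x.2.1 * affToFun q' x.1.1 w)
          ∈ simplexSet ρ :=
      fun x => convex_simplexSet (affToFun_mem x.1.2 fun v hv => (h v hv).1)
        (affToFun_mem x.1.2 fun v hv => (h v hv).2) x.2.1 x.2.2.1 x.2.2.2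
    have hcσ : Continuous (fun x : simplexSet σ × unitInterval => ins hρ ⟨_, hmemρ x⟩) := by
      refine (continuous_ins hρ).comp (Continuous.subtype_mk ?_ _)
      refine continuous_pi fun w => ?_
      have hval : Continuous (fun x : simplexSet σ × unitInterval => x.2.1) :=
        continuous_subtype_val.comp continuous_snd
      have hA : Continuous (fun x : simplexSet σ × unitInterval => affToFun q x.1.1 w) :=
        (continuous_affToFun_apply q σ w).comp continuous_fst
      have hA' : Continuous (fun x : simplexSet σ × unitInterval => affToFun q' x.1.1 w) :=
        (continuous_affToFun_apply q' σ w).comp continuous_fst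
      exact ((continuous_const.sub hval).mul hA).add (hval.mul hA')
    have := (ContinuousMap.curry ⟨_, hcσ⟩).continuous
    refine this.congr fun f => ?_
    refine ContinuousMap.ext fun t => Subtype.ext rfl
  have hcont : Continuous Hfun := by
    have : Continuous fun x : unitInterval × Realization K => (G x.2, x.1) :=
      (hGcont.comp continuous_snd).prodMk continuous_fst
    exact (continuous_eval.comp this : Continuous fun x : unitInterval × Realization K => G x.2 x.1)
  refine ⟨⟨⟨Hfun, hcont⟩, ?_, ?_⟩⟩
  · intro p
    refine Subtype.ext ?_
    show (fun w => (1 - ((0 : unitInterval) : ℝ)) * affToFun q p.1 w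
      + ((0 : unitInterval) : ℝ) * affToFun q' p.1 w) = affToFun q p.1
    funext w; norm_num
  · intro p
    refine Subtype.ext ?_
    show (fun w => (1 - ((1 : unitInterval) : ℝ)) * affToFun q p.1 w
      + ((1 : unitInterval) : ℝ) * affToFun q' p.1 w) = affToFun q' p.1
    funext w; norm_num

end Dowker
namespace Dowker

variable {V : Type*} {W : Type*}

/-- A good simplicial complex: members are nonempty and it is closed under passage to
nonempty subsets. -/
structure IsGood (K : Set (Finset V)) : Prop where
  nonempty : ∀ σ ∈ K, σ.Nonempty
  down : ∀ σ ∈ K, ∀ τ : Finset V, τ ⊆ σ → τ.Nonempty → τ ∈ K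

/-- The barycentric subdivision of a complex: simplices are chains of simplices. -/
def Sd (K : Set (Finset V)) : Set (Finset (Finset V)) :=
  {C | C.Nonempty ∧ (∀ τ ∈ C, τ ∈ K) ∧ ∀ τ₁ ∈ C, ∀ τ₂ ∈ C, τ₁ ⊆ τ₂ ∨ τ₂ ⊆ τ₁}

lemma IsGood.sd {K : Set (Finset V)} (hK : IsGood K) : IsGood (Sd K) := by
  constructor
  · exact fun C hC => hC.1
  · rintro C ⟨_, hmem, hch⟩ D hD hDne
    exact ⟨hDne, fun τ hτ => hmem τ (hD hτ), fun τ₁ h₁ τ₂ h₂ => hch τ₁ (hD h₁) τ₂ (hD h₂)⟩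

lemma sd_mono {K L : Set (Finset V)} (h : K ⊆ L) : Sd K ⊆ Sd L :=
  fun _ ⟨hne, hmem, hch⟩ => ⟨hne, fun τ hτ => h (hmem τ hτ), hch⟩

lemma exists_chain_max (C : Finset (Finset V)) (hne : C.Nonempty)
    (hch : ∀ τ₁ ∈ C, ∀ τ₂ ∈ C, τ₁ ⊆ τ₂ ∨ τ₂ ⊆ τ₁) :
    ∃ m ∈ C, ∀ τ ∈ C, τ ⊆ m := by
  obtain ⟨m, hm, hmax⟩ := C.exists_maximal hne
  refine ⟨m, hm, fun τ hτ => ?_⟩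
  rcases hch τ hτ m hm with h | h
  · exact h
  · rcases eq_or_lt_of_le (Finset.le_iff_subset.mpr h) with he | hss
    · exact le_of_eq he.symm
    · exact ((not_le_of_gt hss) (hmax hτ (le_of_lt hss))).elim

lemma exists_chain_min (C : Finset (Finset V)) (hne : C.Nonempty)
    (hch : ∀ τ₁ ∈ C, ∀ τ₂ ∈ C, τ₁ ⊆ τ₂ ∨ τ₂ ⊆ τ₁) :
    ∃ m ∈ C, ∀ τ ∈ C, m ⊆ τ := by
  obtain ⟨m, hm, hmin⟩ := C.exists_minimal hne
  refine ⟨m, hm, fun τ hτ => ?_⟩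
  rcases hch τ hτ m hm with h | h
  · rcases eq_or_lt_of_le (Finset.le_iff_subset.mpr h) with he | hss
    · exact le_of_eq he.symm
    · exact ((not_le_of_gt hss) (hmin hτ (le_of_lt hss))).elim
  · exact h

open Classical in
/-- The largest simplex of a chain. -/
noncomputable def chainMax (C : Finset (Finset V)) : Finset V :=
  if h : ∃ m ∈ C, ∀ τ ∈ C, τ ⊆ m then h.choose else ∅

open Classical in
/-- The smallest simplex of a chain. -/
noncomputable def chainMin (C : Finset (Finset V)) : Finset V :=
  if h : ∃ m ∈ C, ∀ τ ∈ C, m ⊆ τ then h.choose else ∅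

lemma chainMax_spec {C : Finset (Finset V)} (hne : C.Nonempty)
    (hch : ∀ τ₁ ∈ C, ∀ τ₂ ∈ C, τ₁ ⊆ τ₂ ∨ τ₂ ⊆ τ₁) :
    chainMax C ∈ C ∧ ∀ τ ∈ C, τ ⊆ chainMax C := by
  classical
  have h := exists_chain_max C hne hch
  rw [chainMax, dif_pos h]
  exact ⟨h.choose_spec.1, h.choose_spec.2⟩

lemma chainMin_spec {C : Finset (Finset V)} (hne : C.Nonempty)
    (hch : ∀ τ₁ ∈ C, ∀ τ₂ ∈ C, τ₁ ⊆ τ₂ ∨ τ₂ ⊆ τ₁) :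
    chainMin C ∈ C ∧ ∀ τ ∈ C, chainMin C ⊆ τ := by
  classical
  have h := exists_chain_min C hne hch
  rw [chainMin, dif_pos h]
  exact ⟨h.choose_spec.1, h.choose_spec.2⟩

lemma chainMax_spec' {K : Set (Finset V)} {C : Finset (Finset V)} (hC : C ∈ Sd K) :
    chainMax C ∈ C ∧ ∀ τ ∈ C, τ ⊆ chainMax C := chainMax_spec hC.1 hC.2.2

lemma chainMin_spec' {K : Set (Finset V)} {C : Finset (Finset V)} (hC : C ∈ Sd K) :
    chainMin C ∈ C ∧ ∀ τ ∈ C, chainMin C ⊆ τ := chainMin_spec hC.1 hC.2.2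

open Classical in
/-- Barycentric vertex data. -/
noncomputable def baryData : Finset V → V → ℝ :=
  fun τ v => if v ∈ τ then (τ.card : ℝ)⁻¹ else 0

lemma baryData_mem {τ : Finset V} (hne : τ.Nonempty) : baryData τ ∈ simplexSet τ := by
  classical
  have hcard : (0:ℝ) < τ.card := by exact_mod_cast Finset.card_pos.mpr hne
  refine ⟨fun v hv => by simp [baryData, hv], fun v => ?_, ?_⟩
  · unfold baryData; split
    · positivity
    · exact le_refl 0
  · have : ∀ v ∈ τ, baryData τ v = (τ.card : ℝ)⁻¹ := fun v hv => by simp [baryData, hv]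
    rw [Finset.sum_congr rfl this, Finset.sum_const, nsmul_eq_mul]
    field_simp

/-- The hypothesis needed to build the barycentric map `B : |Sd K| → |K|`. -/
lemma bary_hyp {K : Set (Finset V)} (hK : IsGood K) :
    ∀ C ∈ Sd K, ∃ ρ ∈ K, ∀ τ ∈ C, baryData τ ∈ simplexSet ρ := by
  intro C hC
  refine ⟨chainMax C, hC.2.1 _ (chainMax_spec' hC).1, fun τ hτ => ?_⟩
  exact simplexSet_mono ((chainMax_spec' hC).2 τ hτ)
    (baryData_mem (hK.nonempty τ (hC.2.1 τ hτ)))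

/-- The barycentric map `B : |Sd K| → |K|`. -/
noncomputable def Bmap {K : Set (Finset V)} (hK : IsGood K) :
    C(Realization (Sd K), Realization K) :=
  affMap baryData (bary_hyp hK)

end Dowker
namespace Dowker

variable {V : Type*} {W : Type*}

lemma key_surj {K : Set (Finset V)} (hK : IsGood K) :
    ∀ (n : ℕ) (s : Finset V) (f : V → ℝ), s.card ≤ n → s ∈ K →
      (∀ v, v ∉ s → f v = 0) → (∀ v ∈ s, 0 < f v) → (∑ v ∈ s, f v = 1) →
      ∃ (C : Finset (Finset V)) (g : Finset V → ℝ), C ∈ Sd K ∧ g ∈ simplexSet C ∧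
        (∀ τ ∈ C, τ ⊆ s) ∧ affToFun baryData g = f := by
  intro n
  induction n with
  | zero =>
    intro s f hcard hs h0 hpos hsum
    exfalso
    rw [Nat.le_zero, Finset.card_eq_zero] at hcard
    subst hcard
    simp at hsum
  | succ n ih =>
    intro s f hcard hs h0 hpos hsum
    classical
    have hne : s.Nonempty := by
      by_contra h
      rw [Finset.not_nonempty_iff_eq_empty] at h
      subst h; simp at hsum
    have hcards : (0:ℝ) < s.card := by exact_mod_cast Finset.card_pos.mpr hne
    set m := s.inf' hne f with hm
    obtain ⟨v0, hv0, hv0m⟩ := Finset.exists_mem_eq_inf' hne f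
    rw [← hm] at hv0m
    have hmle : ∀ v ∈ s, m ≤ f v := fun v hv => Finset.inf'_le f hv
    have hmpos : 0 < m := by rw [hv0m]; exact hpos v0 hv0
    by_cases hconst : ∀ v ∈ s, f v = m
    · -- f is the barycenter of s
      have hmeq : (s.card : ℝ) * m = 1 := by
        rw [← hsum, Finset.sum_congr rfl hconst, Finset.sum_const, nsmul_eq_mul]
      refine ⟨{s}, ind s, ⟨Finset.singleton_nonempty s,
        fun τ hτ => by rwa [Finset.mem_singleton.mp hτ],
        fun τ₁ h₁ τ₂ h₂ => by rw [Finset.mem_singleton.mp h₁, Finset.mem_singleton.mp h₂]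
                              exact Or.inl (Finset.Subset.refl _)⟩,
        ind_mem s, fun τ hτ => by rw [Finset.mem_singleton.mp hτ], ?_⟩
      rw [affToFun_ind]
      funext v
      by_cases hv : v ∈ s
      · rw [hconst v hv]
        simp only [baryData, if_pos hv]
        field_simp at hmeq ⊢
        linarith [hmeq]
      · rw [h0 v hv]; simp [baryData, hv]
    · push_neg at hconst
      obtain ⟨v1, hv1, hv1m⟩ := hconst
      set lam := (s.card : ℝ) * m with hlam
      have hlampos : 0 < lam := by rw [hlam]; exact mul_pos hcards hmpos
      have hlamlt : lam < 1 := by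
        rw [← hsum, hlam]
        have : (s.card : ℝ) * m = ∑ _v ∈ s, m := by
          rw [Finset.sum_const, nsmul_eq_mul]
        rw [this]
        exact Finset.sum_lt_sum (fun v hv => hmle v hv)
          ⟨v1, hv1, lt_of_le_of_ne (hmle v1 hv1) (Ne.symm hv1m)⟩
      set s' := s.filter (fun v => f v ≠ m) with hs'
      have hs'sub : s' ⊆ s := Finset.filter_subset _ _
      have hs'ne : s'.Nonempty := ⟨v1, Finset.mem_filter.mpr ⟨hv1, hv1m⟩⟩
      have hv0ns' : v0 ∉ s' := by
        rw [hs', Finset.mem_filter]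
        push_neg
        exact fun _ => hv0m.symm
      have hs'card : s'.card ≤ n := by
        have h1 : s'.card < s.card := Finset.card_lt_card ⟨hs'sub, fun hss => hv0ns' (hss hv0)⟩
        omega
      set f' : V → ℝ := fun v => if v ∈ s' then (f v - m)/(1 - lam) else 0 with hf'
      have h1lam : 0 < 1 - lam := by linarith
      have hsum' : ∑ v ∈ s', (f v - m) = 1 - lam := by
        have : ∑ v ∈ s', (f v - m) = ∑ v ∈ s, (f v - m) := by
          refine Finset.sum_subset hs'sub fun v hv hvn => ?_
          rw [hs', Finset.mem_filter] at hvn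
          push_neg at hvn
          rw [hvn hv]; ring
        rw [this, Finset.sum_sub_distrib, hsum, Finset.sum_const, nsmul_eq_mul, hlam]
      obtain ⟨C', g', hC', hg', hsub', himg'⟩ := ih s' f' hs'card
        (hK.down s hs s' hs'sub hs'ne)
        (fun v hv => by simp only [hf']; rw [if_neg hv])
        (fun v hv => by
          simp only [hf']
          rw [if_pos hv]
          rw [hs', Finset.mem_filter] at hv
          have h1 := hmle v hv.1
          have h2 : m < f v := lt_of_le_of_ne h1 (Ne.symm hv.2)
          exact div_pos (by linarith) h1lam)
        (by
          have hcng : ∀ v ∈ s', f' v = (f v - m)/(1 - lam) := fun v hv => by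
            simp only [hf']; rw [if_pos hv]
          rw [Finset.sum_congr rfl hcng, ← Finset.sum_div, hsum']
          field_simp)
      have hsnotin : s ∉ C' := fun hsC => by
        have := hsub' s hsC
        have : v1 ∈ s' := this (by exact hv1)
        rw [hs', Finset.mem_filter] at hv0ns'
        have hv0s' : v0 ∈ s' := hsub' s hsC hv0
        exact hv0ns' (Finset.mem_filter.mp hv0s')
      set C := insert s C' with hC
      set g : Finset V → ℝ := fun τ => if τ = s then lam else (1 - lam) * g' τ with hg
      have hCsd : C ∈ Sd K := by
        refine ⟨Finset.insert_nonempty _ _, fun τ hτ => ?_, fun τ₁ h₁ τ₂ h₂ => ?_⟩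
        · rcases Finset.mem_insert.mp hτ with rfl | hτ'
          · exact hs
          · exact hC'.2.1 τ hτ'
        · rcases Finset.mem_insert.mp h₁ with rfl | h₁' <;>
            rcases Finset.mem_insert.mp h₂ with rfl | h₂'
          · exact Or.inl (Finset.Subset.refl _)
          · exact Or.inr ((hsub' τ₂ h₂').trans hs'sub)
          · exact Or.inl ((hsub' τ₁ h₁').trans hs'sub)
          · exact hC'.2.2 τ₁ h₁' τ₂ h₂'
      have hgmem : g ∈ simplexSet C := by
        refine ⟨fun τ hτ => ?_, fun τ => ?_, ?_⟩
        · rw [hC, Finset.mem_insert] at hτ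
          push_neg at hτ
          simp only [hg]
          rw [if_neg hτ.1, hg'.1 τ hτ.2, mul_zero]
        · simp only [hg]
          by_cases hτ : τ = s
          · rw [if_pos hτ]; linarith
          · rw [if_neg hτ]
            exact mul_nonneg (by linarith) (hg'.2.1 τ)
        · rw [hC, Finset.sum_insert hsnotin]
          have hgs2 : g s = lam := by simp [hg]
          have hterm2 : ∀ τ ∈ C', g τ = (1 - lam) * g' τ := fun τ hτ => by
            simp only [hg]; rw [if_neg (fun he => hsnotin (by rw [← he]; exact hτ))]
          rw [hgs2, Finset.sum_congr rfl hterm2, ← Finset.mul_sum, hg'.2.2]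
          ring
      refine ⟨C, g, hCsd, hgmem, fun τ hτ => ?_, ?_⟩
      · rcases Finset.mem_insert.mp hτ with rfl | hτ'
        · exact Finset.Subset.refl _
        · exact (hsub' τ hτ').trans hs'sub
      · funext v
        rw [affToFun_eq_sum (σ := C) hgmem.1 v, hC, Finset.sum_insert hsnotin]
        have hterm : ∀ τ ∈ C', g τ * baryData τ v = (1 - lam) * (g' τ * baryData τ v) := by
          intro τ hτ
          simp only [hg]
          rw [if_neg (fun he => hsnotin (by rw [← he]; exact hτ))]
          ring
        rw [Finset.sum_congr rfl hterm, ← Finset.mul_sum]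
        have hres : ∑ τ ∈ C', g' τ * baryData τ v = f' v := by
          rw [← affToFun_eq_sum (σ := C') hg'.1 v, himg']
        rw [hres]
        have hgs : g s = lam := by simp [hg]
        rw [hgs]
        by_cases hv : v ∈ s
        · have hbar : baryData s v = (s.card : ℝ)⁻¹ := by simp [baryData, hv]
          rw [hbar]
          by_cases hv' : v ∈ s'
          · simp only [hf']
            rw [if_pos hv', hlam]
            field_simp
            rw [mul_div_cancel_left₀ _ (show (1 - (s.card:ℝ) * m) ≠ 0 by rw [← hlam]; exact h1lam.ne')]
            ring
          · have hfv : f v = m := by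
              rw [hs', Finset.mem_filter] at hv'
              push_neg at hv'
              exact hv' hv
            simp only [hf']
            rw [if_neg hv', hfv, hlam]
            have hcne : (s.card : ℝ) ≠ 0 := ne_of_gt hcards
            field_simp
            ring
          -- done
        · have hbar : baryData s v = 0 := by simp [baryData, hv]
          have hf'v : f' v = 0 := by
            simp only [hf']
            rw [if_neg (fun hv' => hv (hs'sub hv'))]
          rw [hbar, hf'v, h0 v hv]
          ring

end Dowker
namespace Dowker

variable {V : Type*}

section inj

variable {g : Finset V → ℝ} {S : Finset (Finset V)}

lemma baryData_nonneg (τ : Finset V) (v : V) : 0 ≤ baryData τ v := by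
  classical
  unfold baryData; split
  · positivity
  · exact le_refl 0

lemma baryData_pos {τ : Finset V} {v : V} (hv : v ∈ τ) : 0 < baryData τ v := by
  classical
  have : (0:ℝ) < τ.card := by exact_mod_cast Finset.card_pos.mpr ⟨v, hv⟩
  simp only [baryData, if_pos hv]
  positivity

lemma baryData_eq_zero {τ : Finset V} {v : V} (hv : v ∉ τ) : baryData τ v = 0 := by
  classical
  simp [baryData, hv]

lemma support_char (h0 : ∀ τ, τ ∉ S → g τ = 0) (hpos : ∀ τ ∈ S, 0 < g τ)
    (hch : ∀ τ₁ ∈ S, ∀ τ₂ ∈ S, τ₁ ⊆ τ₂ ∨ τ₂ ⊆ τ₁) (hSne : S.Nonempty) (v : V) :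
    0 < affToFun baryData g v ↔ v ∈ chainMax S := by
  obtain ⟨hM, hMmax⟩ := chainMax_spec hSne hch
  rw [affToFun_eq_sum (σ := S) h0 v]
  constructor
  · intro hlt
    by_contra hv
    have : ∀ τ ∈ S, g τ * baryData τ v = 0 := by
      intro τ hτ
      rw [baryData_eq_zero (fun hvτ => hv (hMmax τ hτ hvτ)), mul_zero]
    rw [Finset.sum_congr rfl this, Finset.sum_const, smul_zero] at hlt
    exact lt_irrefl 0 hlt
  · intro hv
    have hterm : 0 < g (chainMax S) * baryData (chainMax S) v :=
      mul_pos (hpos _ hM) (baryData_pos hv)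
    calc (0:ℝ) < g (chainMax S) * baryData (chainMax S) v := hterm
      _ ≤ ∑ τ ∈ S, g τ * baryData τ v :=
        Finset.single_le_sum (fun τ hτ => mul_nonneg (hpos τ hτ).le (baryData_nonneg τ v)) hM

lemma top_coeff (h0 : ∀ τ, τ ∉ S → g τ = 0) (hpos : ∀ τ ∈ S, 0 < g τ)
    (hch : ∀ τ₁ ∈ S, ∀ τ₂ ∈ S, τ₁ ⊆ τ₂ ∨ τ₂ ⊆ τ₁) (hne : ∀ τ ∈ S, τ.Nonempty)
    (hSne : S.Nonempty) :
    (∀ v ∈ chainMax S, g (chainMax S) * ((chainMax S).card : ℝ)⁻¹ ≤ affToFun baryData g v) ∧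
    ∃ v0 ∈ chainMax S,
      affToFun baryData g v0 = g (chainMax S) * ((chainMax S).card : ℝ)⁻¹ := by
  classical
  obtain ⟨hM, hMmax⟩ := chainMax_spec hSne hch
  set M := chainMax S with hMdef
  have hbar : ∀ v ∈ M, baryData M v = (M.card : ℝ)⁻¹ := fun v hv => by
    simp [baryData, hv]
  have hsplit : ∀ v, affToFun baryData g v
      = g M * baryData M v + ∑ τ ∈ S.erase M, g τ * baryData τ v := by
    intro v
    rw [affToFun_eq_sum (σ := S) h0 v, ← Finset.add_sum_erase _ _ hM]
  constructor
  · intro v hv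
    rw [hsplit v, hbar v hv]
    have : 0 ≤ ∑ τ ∈ S.erase M, g τ * baryData τ v :=
      Finset.sum_nonneg fun τ hτ =>
        mul_nonneg (hpos τ (Finset.mem_of_mem_erase hτ)).le (baryData_nonneg τ v)
    linarith
  · by_cases hE : (S.erase M).Nonempty
    · have hchE : ∀ τ₁ ∈ S.erase M, ∀ τ₂ ∈ S.erase M, τ₁ ⊆ τ₂ ∨ τ₂ ⊆ τ₁ :=
        fun τ₁ h₁ τ₂ h₂ =>
          hch τ₁ (Finset.mem_of_mem_erase h₁) τ₂ (Finset.mem_of_mem_erase h₂)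
      obtain ⟨hU, hUmax⟩ := chainMax_spec hE hchE
      set U := chainMax (S.erase M) with hUdef
      have hUM : U ⊆ M := hMmax U (Finset.mem_of_mem_erase hU)
      have hUne : U ≠ M := Finset.ne_of_mem_erase hU
      obtain ⟨v0, hv0M, hv0U⟩ := Finset.exists_of_ssubset (ssubset_of_subset_of_ne hUM hUne)
      refine ⟨v0, hv0M, ?_⟩
      rw [hsplit v0, hbar v0 hv0M]
      have : ∀ τ ∈ S.erase M, g τ * baryData τ v0 = 0 := by
        intro τ hτ
        rw [baryData_eq_zero (fun hvτ => hv0U (hUmax τ hτ hvτ)), mul_zero]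
      rw [Finset.sum_congr rfl this, Finset.sum_const, smul_zero, add_zero]
    · obtain ⟨v0, hv0⟩ := hne M hM
      refine ⟨v0, hv0, ?_⟩
      rw [hsplit v0, hbar v0 hv0]
      rw [Finset.not_nonempty_iff_eq_empty] at hE
      rw [hE, Finset.sum_empty, add_zero]

lemma affToFun_zero_of_zero : affToFun baryData (fun _ : Finset V => (0:ℝ)) = fun _ => (0:ℝ) := by
  funext v
  rw [affToFun_eq_sum (σ := (∅ : Finset (Finset V))) (fun _ _ => rfl) v, Finset.sum_empty]

lemma key_inj :
    ∀ (n : ℕ) (g1 g2 : Finset V → ℝ) (S1 S2 : Finset (Finset V)),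
      S1.card + S2.card ≤ n →
      (∀ τ, τ ∉ S1 → g1 τ = 0) → (∀ τ ∈ S1, 0 < g1 τ) →
      (∀ τ₁ ∈ S1, ∀ τ₂ ∈ S1, τ₁ ⊆ τ₂ ∨ τ₂ ⊆ τ₁) → (∀ τ ∈ S1, τ.Nonempty) →
      (∀ τ, τ ∉ S2 → g2 τ = 0) → (∀ τ ∈ S2, 0 < g2 τ) →
      (∀ τ₁ ∈ S2, ∀ τ₂ ∈ S2, τ₁ ⊆ τ₂ ∨ τ₂ ⊆ τ₁) → (∀ τ ∈ S2, τ.Nonempty) →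
      affToFun baryData g1 = affToFun baryData g2 → g1 = g2 := by
  intro n
  induction n with
  | zero =>
    intro g1 g2 S1 S2 hcard h10 _ _ _ h20 _ _ _ _
    have h1 : S1 = ∅ := Finset.card_eq_zero.mp (by omega)
    have h2 : S2 = ∅ := Finset.card_eq_zero.mp (by omega)
    subst h1; subst h2
    funext τ
    rw [h10 τ (Finset.notMem_empty τ), h20 τ (Finset.notMem_empty τ)]
  | succ n ih =>
    intro g1 g2 S1 S2 hcard h10 h1pos h1ch h1ne h20 h2pos h2ch h2ne heq
    classical
    by_cases hS1 : S1 = ∅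
    · subst hS1
      have hg1 : g1 = fun _ => 0 := funext fun τ => h10 τ (Finset.notMem_empty τ)
      have hS2 : S2 = ∅ := by
        by_contra hS2
        replace hS2 : S2.Nonempty := Finset.nonempty_iff_ne_empty.mpr hS2
        obtain ⟨hM, _⟩ := chainMax_spec hS2 h2ch
        obtain ⟨v, hv⟩ := h2ne _ hM
        have := (support_char h20 h2pos h2ch hS2 v).mpr hv
        rw [← heq, hg1, affToFun_zero_of_zero] at this
        exact lt_irrefl 0 this
      subst hS2
      funext τ
      rw [h10 τ (Finset.notMem_empty τ), h20 τ (Finset.notMem_empty τ)]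
    · by_cases hS2 : S2 = ∅
      · subst hS2
        exfalso
        have hg2 : g2 = fun _ => 0 := funext fun τ => h20 τ (Finset.notMem_empty τ)
        replace hS1 : S1.Nonempty := Finset.nonempty_iff_ne_empty.mpr hS1
        obtain ⟨hM, _⟩ := chainMax_spec hS1 h1ch
        obtain ⟨v, hv⟩ := h1ne _ hM
        have := (support_char h10 h1pos h1ch hS1 v).mpr hv
        rw [heq, hg2, affToFun_zero_of_zero] at this
        exact lt_irrefl 0 this
      · replace hS1 : S1.Nonempty := Finset.nonempty_iff_ne_empty.mpr hS1
        replace hS2 : S2.Nonempty := Finset.nonempty_iff_ne_empty.mpr hS2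
        -- the two maximal simplices agree
        have hMeq : chainMax S1 = chainMax S2 := by
          refine Finset.ext fun v => ?_
          rw [← support_char h10 h1pos h1ch hS1 v, ← support_char h20 h2pos h2ch hS2 v, heq]
        -- top coefficients agree
        obtain ⟨hle1, v1, hv1M, hv1⟩ := top_coeff h10 h1pos h1ch h1ne hS1
        obtain ⟨hle2, v2, hv2M, hv2⟩ := top_coeff h20 h2pos h2ch h2ne hS2
        rw [← hMeq] at hle2 hv2M hv2
        rw [← heq] at hle2 hv2
        set M := chainMax S1 with hMdef
        have hM1 : M ∈ S1 := (chainMax_spec hS1 h1ch).1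
        have hM2 : M ∈ S2 := hMeq ▸ (chainMax_spec hS2 h2ch).1
        have hc12 : g1 M * ((M.card : ℝ)⁻¹) = g2 M * ((M.card : ℝ)⁻¹) := by
          have ha := hle1 v2 hv2M
          have hb := hle2 v1 hv1M
          rw [hv2] at ha
          rw [hv1] at hb
          exact le_antisymm ha hb
        have hMcard : (0:ℝ) < M.card := by
          exact_mod_cast Finset.card_pos.mpr (h1ne M hM1)
        have hgM : g1 M = g2 M := by
          have hinv : ((M.card : ℝ)⁻¹) ≠ 0 := by positivity
          exact mul_right_cancel₀ hinv hc12
        -- induct on the erased supports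
        set g1' := Function.update g1 M 0 with hg1'
        set g2' := Function.update g2 M 0 with hg2'
        have hcard' : (S1.erase M).card + (S2.erase M).card ≤ n := by
          rw [Finset.card_erase_of_mem hM1, Finset.card_erase_of_mem hM2]
          have := Finset.card_pos.mpr hS1
          have := Finset.card_pos.mpr hS2
          omega
        have hsub1 : ∀ τ, τ ∉ S1.erase M → g1' τ = 0 := by
          intro τ hτ
          by_cases hτM : τ = M
          · subst hτM; rw [hg1', Function.update_self]
          · rw [hg1', Function.update_of_ne hτM]
            exact h10 τ (fun hτS => hτ (Finset.mem_erase.mpr ⟨hτM, hτS⟩))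
        have hsub2 : ∀ τ, τ ∉ S2.erase M → g2' τ = 0 := by
          intro τ hτ
          by_cases hτM : τ = M
          · subst hτM; rw [hg2', Function.update_self]
          · rw [hg2', Function.update_of_ne hτM]
            exact h20 τ (fun hτS => hτ (Finset.mem_erase.mpr ⟨hτM, hτS⟩))
        have hsplit1 : ∀ v, affToFun baryData g1 v
            = g1 M * baryData M v + ∑ τ ∈ S1.erase M, g1 τ * baryData τ v := by
          intro v
          rw [affToFun_eq_sum (σ := S1) h10 v, ← Finset.add_sum_erase _ _ hM1]
        have hsplit2 : ∀ v, affToFun baryData g2 v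
            = g2 M * baryData M v + ∑ τ ∈ S2.erase M, g2 τ * baryData τ v := by
          intro v
          rw [affToFun_eq_sum (σ := S2) h20 v, ← Finset.add_sum_erase _ _ hM2]
        have he1 : ∀ v, affToFun baryData g1' v
            = ∑ τ ∈ S1.erase M, g1 τ * baryData τ v := by
          intro v
          rw [affToFun_eq_sum (σ := S1.erase M) hsub1 v]
          refine Finset.sum_congr rfl fun τ hτ => ?_
          rw [hg1', Function.update_of_ne (Finset.ne_of_mem_erase hτ)]
        have he2 : ∀ v, affToFun baryData g2' v
            = ∑ τ ∈ S2.erase M, g2 τ * baryData τ v := by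
          intro v
          rw [affToFun_eq_sum (σ := S2.erase M) hsub2 v]
          refine Finset.sum_congr rfl fun τ hτ => ?_
          rw [hg2', Function.update_of_ne (Finset.ne_of_mem_erase hτ)]
        have himg : affToFun baryData g1' = affToFun baryData g2' := by
          funext v
          rw [he1 v, he2 v]
          have hx : g1 M * baryData M v + ∑ τ ∈ S1.erase M, g1 τ * baryData τ v
              = g2 M * baryData M v + ∑ τ ∈ S2.erase M, g2 τ * baryData τ v := by
            rw [← hsplit1 v, ← hsplit2 v]
            exact congrFun heq v
          rw [hgM] at hx
          linarith
        have ihres := ih g1' g2' (S1.erase M) (S2.erase M) hcard' hsub1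
          (fun τ hτ => by
            rw [hg1', Function.update_of_ne (Finset.ne_of_mem_erase hτ)]
            exact h1pos τ (Finset.mem_of_mem_erase hτ))
          (fun τ₁ h₁ τ₂ h₂ =>
            h1ch τ₁ (Finset.mem_of_mem_erase h₁) τ₂ (Finset.mem_of_mem_erase h₂))
          (fun τ hτ => h1ne τ (Finset.mem_of_mem_erase hτ))
          hsub2
          (fun τ hτ => by
            rw [hg2', Function.update_of_ne (Finset.ne_of_mem_erase hτ)]
            exact h2pos τ (Finset.mem_of_mem_erase hτ))
          (fun τ₁ h₁ τ₂ h₂ =>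
            h2ch τ₁ (Finset.mem_of_mem_erase h₁) τ₂ (Finset.mem_of_mem_erase h₂))
          (fun τ hτ => h2ne τ (Finset.mem_of_mem_erase hτ))
          himg
        funext τ
        by_cases hτM : τ = M
        · subst hτM; exact hgM
        · have hres := congrFun ihres τ
          rwa [hg1', hg2', Function.update_of_ne hτM, Function.update_of_ne hτM] at hres

end inj

end Dowker
namespace Dowker

variable {V : Type*}

lemma Bmap_injective {K : Set (Finset V)} (hK : IsGood K) :
    Function.Injective (Bmap hK) := by
  classical
  intro p1 p2 h
  obtain ⟨C1, hC1, hp1⟩ := p1.2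
  obtain ⟨C2, hC2, hp2⟩ := p2.2
  have hval : affToFun baryData p1.1 = affToFun baryData p2.1 := congrArg Subtype.val h
  set S1 := C1.filter (fun τ => 0 < p1.1 τ) with hS1
  set S2 := C2.filter (fun τ => 0 < p2.1 τ) with hS2
  have key := key_inj (S1.card + S2.card) p1.1 p2.1 S1 S2 le_rfl
    (fun τ hτ => by
      by_cases hτC : τ ∈ C1
      · by_contra hne
        exact hτ (Finset.mem_filter.mpr ⟨hτC, lt_of_le_of_ne (hp1.2.1 τ) (Ne.symm hne)⟩)
      · exact hp1.1 τ hτC)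
    (fun τ hτ => (Finset.mem_filter.mp hτ).2)
    (fun τ₁ h₁ τ₂ h₂ => hC1.2.2 τ₁ (Finset.mem_filter.mp h₁).1 τ₂ (Finset.mem_filter.mp h₂).1)
    (fun τ hτ => hK.nonempty τ (hC1.2.1 τ (Finset.mem_filter.mp hτ).1))
    (fun τ hτ => by
      by_cases hτC : τ ∈ C2
      · by_contra hne
        exact hτ (Finset.mem_filter.mpr ⟨hτC, lt_of_le_of_ne (hp2.2.1 τ) (Ne.symm hne)⟩)
      · exact hp2.1 τ hτC)
    (fun τ hτ => (Finset.mem_filter.mp hτ).2)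
    (fun τ₁ h₁ τ₂ h₂ => hC2.2.2 τ₁ (Finset.mem_filter.mp h₁).1 τ₂ (Finset.mem_filter.mp h₂).1)
    (fun τ hτ => hK.nonempty τ (hC2.2.1 τ (Finset.mem_filter.mp hτ).1))
    hval
  exact Subtype.ext key

lemma Bmap_surjective {K : Set (Finset V)} (hK : IsGood K) :
    Function.Surjective (Bmap hK) := by
  classical
  intro q
  obtain ⟨σ, hσ, hf⟩ := q.2
  set s := σ.filter (fun v => 0 < q.1 v) with hsdef
  have hssub : s ⊆ σ := Finset.filter_subset _ _
  have hsne : s.Nonempty := by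
    by_contra hs
    rw [Finset.not_nonempty_iff_eq_empty, Finset.filter_eq_empty_iff] at hs
    have : ∑ v ∈ σ, q.1 v = 0 := Finset.sum_eq_zero fun v hv =>
      le_antisymm (not_lt.mp (hs hv)) (hf.2.1 v)
    rw [hf.2.2] at this
    exact one_ne_zero this
  obtain ⟨C, g, hC, hg, _, himg⟩ := key_surj hK s.card s q.1 le_rfl
    (hK.down σ hσ s hssub hsne)
    (fun v hv => by
      by_cases hvσ : v ∈ σ
      · by_contra hne
        exact hv (Finset.mem_filter.mpr ⟨hvσ, lt_of_le_of_ne (hf.2.1 v) (Ne.symm hne)⟩)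
      · exact hf.1 v hvσ)
    (fun v hv => (Finset.mem_filter.mp hv).2)
    (by
      have hss : ∑ v ∈ s, q.1 v = ∑ v ∈ σ, q.1 v := by
        rw [hsdef]
        exact Finset.sum_filter_of_ne fun v hv h => lt_of_le_of_ne (hf.2.1 v) (Ne.symm h)
      rw [hss, hf.2.2])
  exact ⟨⟨g, C, hC, hg⟩, Subtype.ext himg⟩

/-- The barycentric map as an equivalence. -/
noncomputable def Bequiv {K : Set (Finset V)} (hK : IsGood K) :
    Realization (Sd K) ≃ Realization K :=
  Equiv.ofBijective (Bmap hK) ⟨Bmap_injective hK, Bmap_surjective hK⟩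

lemma continuous_Bsymm {K : Set (Finset V)} (hK : IsGood K) :
    Continuous ⇑(Bequiv hK).symm := by
  classical
  refine continuous_out fun σ hσ => ?_
  set KS : Set (Finset V) := {τ : Finset V | τ.Nonempty ∧ τ ⊆ σ} with hKS
  have hKSgood : IsGood KS := ⟨fun τ hτ => hτ.1, fun τ hτ ρ hρ hne => ⟨hne, hρ.trans hτ.2⟩⟩
  have hfin : (Sd KS).Finite := by
    refine Set.Finite.subset (σ.powerset.powerset : Finset (Finset (Finset V))).finite_toSet ?_
    intro C hC
    rw [Finset.mem_coe, Finset.mem_powerset]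
    intro τ hτ
    rw [Finset.mem_powerset]
    exact (hC.2.1 τ hτ).2
  haveI := compactSpace_realization hfin
  have hcont : Continuous ⇑(Bequiv hKSgood) := (Bmap hKSgood).continuous
  let H : Realization (Sd KS) ≃ₜ Realization KS := Continuous.homeoOfEquivCompactToT2 hcont
  have hσKS : σ ∈ KS := ⟨hK.nonempty σ hσ, subset_rfl⟩
  have hsub : Sd KS ⊆ Sd K := sd_mono (fun τ hτ => hK.down σ hσ τ hτ.2 hτ.1)
  have key : ∀ f : simplexSet σ, (Bequiv hK).symm (ins hσ f)
      = inclusionMap hsub (H.symm (ins hσKS f)) := by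
    intro f
    rw [Equiv.symm_apply_eq]
    refine Subtype.ext ?_
    show (f : V → ℝ) = affToFun baryData (H.symm (ins hσKS f)).1
    have h2 : affToFun baryData (H.symm (ins hσKS f)).1
        = (H (H.symm (ins hσKS f))).1 := rfl
    rw [h2, H.apply_symm_apply]
    rfl
  have hcont2 : Continuous (fun f : simplexSet σ =>
      inclusionMap hsub (H.symm (ins hσKS f))) :=
    (inclusionMap hsub).continuous.comp (H.symm.continuous.comp (continuous_ins hσKS))
  exact hcont2.congr fun f => (key f).symm

/-- The barycentric homeomorphism `|Sd K| ≃ₜ |K|`. -/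
noncomputable def Bhomeo {K : Set (Finset V)} (hK : IsGood K) :
    Realization (Sd K) ≃ₜ Realization K where
  toEquiv := Bequiv hK
  continuous_toFun := (Bmap hK).continuous
  continuous_invFun := continuous_Bsymm hK

lemma Bhomeo_toCM {K : Set (Finset V)} (hK : IsGood K) :
    ((Bhomeo hK) : C(_, _)) = Bmap hK := by
  refine ContinuousMap.ext fun p => rfl

@[simp] lemma Bhomeo_apply_val {K : Set (Finset V)} (hK : IsGood K) (p : Realization (Sd K)) :
    ((Bhomeo hK) p).1 = affToFun baryData p.1 := rfl

end Dowker
namespace Dowker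

variable {V W : Type*}

section core

variable [DecidableEq V] [DecidableEq W]
variable {K : Set (Finset V)} {L : Set (Finset W)} {r : V → W → Prop}
  {a : Finset V → W} {b : Finset W → V}

lemma image_chain_mem (hK : IsGood K)
    (haK : ∀ σ ∈ K, ∀ v ∈ σ, r v (a σ))
    (hrL : ∀ ρ : Finset W, ρ.Nonempty → (∃ v, ∀ w ∈ ρ, r v w) → ρ ∈ L) :
    ∀ C ∈ Sd K, C.image a ∈ L := by
  intro C hC
  obtain ⟨hMin, hMinsub⟩ := chainMin_spec' hC
  obtain ⟨v0, hv0⟩ := hK.nonempty _ (hC.2.1 _ hMin)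
  refine hrL _ (hC.1.image a) ⟨v0, ?_⟩
  intro w hw
  obtain ⟨τ, hτ, rfl⟩ := Finset.mem_image.mp hw
  exact haK τ (hC.2.1 τ hτ) v0 (hMinsub τ hτ hv0)

lemma phi_hyp (hK : IsGood K)
    (haK : ∀ σ ∈ K, ∀ v ∈ σ, r v (a σ))
    (hrL : ∀ ρ : Finset W, ρ.Nonempty → (∃ v, ∀ w ∈ ρ, r v w) → ρ ∈ L) :
    ∀ C ∈ Sd K, ∃ ρ ∈ L, ∀ τ ∈ C, ind (a τ) ∈ simplexSet ρ := by
  intro C hC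
  refine ⟨C.image a, image_chain_mem hK haK hrL C hC, fun τ hτ => ?_⟩
  exact simplexSet_mono (Finset.singleton_subset_iff.mpr (Finset.mem_image_of_mem a hτ))
    (ind_mem (a τ))

lemma sd_image_mem (hK : IsGood K)
    (haK : ∀ σ ∈ K, ∀ v ∈ σ, r v (a σ))
    (hrL : ∀ ρ : Finset W, ρ.Nonempty → (∃ v, ∀ w ∈ ρ, r v w) → ρ ∈ L) :
    ∀ S ∈ Sd (Sd K), S.image (fun C => C.image a) ∈ Sd L := by
  intro S hS
  refine ⟨hS.1.image _, ?_, ?_⟩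
  · intro ρ hρ
    obtain ⟨C, hC, rfl⟩ := Finset.mem_image.mp hρ
    exact image_chain_mem hK haK hrL C (hS.2.1 C hC)
  · intro ρ₁ h₁ ρ₂ h₂
    obtain ⟨C₁, hC₁, rfl⟩ := Finset.mem_image.mp h₁
    obtain ⟨C₂, hC₂, rfl⟩ := Finset.mem_image.mp h₂
    rcases hS.2.2 C₁ hC₁ C₂ hC₂ with h | h
    · exact Or.inl (Finset.image_subset_image h)
    · exact Or.inr (Finset.image_subset_image h)

lemma sdphi_hyp (hK : IsGood K)
    (haK : ∀ σ ∈ K, ∀ v ∈ σ, r v (a σ))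
    (hrL : ∀ ρ : Finset W, ρ.Nonempty → (∃ v, ∀ w ∈ ρ, r v w) → ρ ∈ L) :
    ∀ S ∈ Sd (Sd K), ∃ ρ ∈ Sd L, ∀ C ∈ S, ind (C.image a) ∈ simplexSet ρ := by
  intro S hS
  refine ⟨S.image (fun C => C.image a), sd_image_mem hK haK hrL S hS, fun C hC => ?_⟩
  exact simplexSet_mono
    (Finset.singleton_subset_iff.mpr (Finset.mem_image_of_mem _ hC)) (ind_mem _)

/-- data equality gives equal affine maps (proofs are irrelevant). -/
lemma affMap_congr_data {K' : Set (Finset V)} {L' : Set (Finset W)} {q q' : V → W → ℝ}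
    (h : ∀ σ ∈ K', ∃ ρ ∈ L', ∀ v ∈ σ, q v ∈ simplexSet ρ)
    (h' : ∀ σ ∈ K', ∃ ρ ∈ L', ∀ v ∈ σ, q' v ∈ simplexSet ρ)
    (hdata : q = q') : affMap q h = affMap q' h' := by
  subst hdata
  rfl

end core

end Dowker
namespace Dowker

variable {V W : Type*}

open Classical in
/-- Select a vertex of a (nonempty) simplex, as indicator data. -/
noncomputable def selData (τ : Finset V) : V → ℝ :=
  if h : τ.Nonempty then ind h.choose else fun _ => 0

lemma selData_spec {τ : Finset V} (h : τ.Nonempty) : ∃ v ∈ τ, selData τ = ind v := by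
  classical
  rw [selData, dif_pos h]
  exact ⟨h.choose, h.choose_spec, rfl⟩

section core

variable [DecidableEq V] [DecidableEq W]
variable {K : Set (Finset V)} {L : Set (Finset W)} {r : V → W → Prop}
  {a : Finset V → W} {b : Finset W → V}

theorem core_homotopic
    (hK : IsGood K) (hL : IsGood L)
    (haK : ∀ σ ∈ K, ∀ v ∈ σ, r v (a σ))
    (hbL : ∀ ρ ∈ L, ∀ w ∈ ρ, r (b ρ) w)
    (hrK : ∀ σ : Finset V, σ.Nonempty → (∃ w, ∀ v ∈ σ, r v w) → σ ∈ K)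
    (hrL : ∀ ρ : Finset W, ρ.Nonempty → (∃ v, ∀ w ∈ ρ, r v w) → ρ ∈ L)
    (hφ : ∀ C ∈ Sd K, ∃ ρ ∈ L, ∀ τ ∈ C, ind (a τ) ∈ simplexSet ρ)
    (hψ : ∀ C ∈ Sd L, ∃ ρ ∈ K, ∀ τ ∈ C, ind (b τ) ∈ simplexSet ρ) :
    (((affMap (fun ρ => ind (b ρ)) hψ).comp ((Bhomeo hL).symm : C(_, _))).comp
      ((affMap (fun τ => ind (a τ)) hφ).comp ((Bhomeo hK).symm : C(_, _)))).Homotopic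
      (ContinuousMap.id (Realization K)) := by
  -- the three joint simplex conditions
  have hjoint1 : ∀ S ∈ Sd (Sd K), ∃ ρ ∈ L, ∀ C ∈ S,
      baryData (C.image a) ∈ simplexSet ρ ∧
      affToFun (fun τ => ind (a τ)) (baryData C) ∈ simplexSet ρ := by
    intro S hS
    refine ⟨(chainMax S).image a,
      image_chain_mem hK haK hrL _ (hS.2.1 _ (chainMax_spec' hS).1), fun C hC => ?_⟩
    have hCK : C ∈ Sd K := hS.2.1 C hC
    have himg : C.image a ⊆ (chainMax S).image a :=
      Finset.image_subset_image ((chainMax_spec' hS).2 C hC)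
    constructor
    · exact simplexSet_mono himg (baryData_mem (hCK.1.image a))
    · refine simplexSet_mono himg (affToFun_mem (baryData_mem hCK.1) fun τ hτ => ?_)
      exact simplexSet_mono
        (Finset.singleton_subset_iff.mpr (Finset.mem_image_of_mem a hτ)) (ind_mem _)
  have hjoint2 : ∀ S ∈ Sd (Sd K), ∃ ρ ∈ K, ∀ C ∈ S,
      ind (b (C.image a)) ∈ simplexSet ρ ∧ selData (chainMin C) ∈ simplexSet ρ := by
    intro S hS
    have hC1S : chainMin S ∈ S := (chainMin_spec' hS).1
    have hC1K : chainMin S ∈ Sd K := hS.2.1 _ hC1S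
    have hTC1 : chainMax (chainMin S) ∈ chainMin S := (chainMax_spec' hC1K).1
    have hTK : chainMax (chainMin S) ∈ K := hC1K.2.1 _ hTC1
    set T := chainMax (chainMin S) with hT
    refine ⟨S.image (fun C => b (C.image a)) ∪ T, ?_, ?_⟩
    · refine hrK _ ?_ ⟨a T, ?_⟩
      · exact Finset.Nonempty.mono Finset.subset_union_left (hS.1.image _)
      · intro v hv
        rcases Finset.mem_union.mp hv with hv | hv
        · obtain ⟨C, hC, rfl⟩ := Finset.mem_image.mp hv
          refine hbL _ (image_chain_mem hK haK hrL C (hS.2.1 C hC)) _ ?_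
          exact Finset.mem_image_of_mem a ((chainMin_spec' hS).2 C hC hTC1)
        · exact haK T hTK v hv
    · intro C hC
      have hCK : C ∈ Sd K := hS.2.1 C hC
      constructor
      · refine simplexSet_mono (Finset.singleton_subset_iff.mpr ?_) (ind_mem _)
        exact Finset.mem_union_left _ (Finset.mem_image_of_mem _ hC)
      · have hmC : chainMin C ∈ C := (chainMin_spec' hCK).1
        have hmne : (chainMin C).Nonempty := hK.nonempty _ (hCK.2.1 _ hmC)
        obtain ⟨v, hvmem, hveq⟩ := selData_spec hmne
        rw [hveq]
        refine simplexSet_mono (Finset.singleton_subset_iff.mpr ?_) (ind_mem _)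
        refine Finset.mem_union_right _ ?_
        have h1 : chainMin C ⊆ chainMin (chainMin S) :=
          (chainMin_spec' hCK).2 _ ((chainMin_spec' hS).2 C hC (chainMin_spec' hC1K).1)
        have h2 : chainMin (chainMin S) ⊆ T := (chainMin_spec' hC1K).2 _ hTC1
        exact h2 (h1 hvmem)
  have hjoint3 : ∀ S ∈ Sd (Sd K), ∃ ρ ∈ K, ∀ C ∈ S,
      selData (chainMin C) ∈ simplexSet ρ ∧
      affToFun baryData (baryData C) ∈ simplexSet ρ := by
    intro S hS
    have hCnSd : chainMax S ∈ Sd K := hS.2.1 _ (chainMax_spec' hS).1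
    refine ⟨chainMax (chainMax S), hCnSd.2.1 _ (chainMax_spec' hCnSd).1, fun C hC => ?_⟩
    have hCK : C ∈ Sd K := hS.2.1 C hC
    have hCmax : chainMax C ⊆ chainMax (chainMax S) :=
      (chainMax_spec' hCnSd).2 _ ((chainMax_spec' hS).2 C hC (chainMax_spec' hCK).1)
    constructor
    · have hmC : chainMin C ∈ C := (chainMin_spec' hCK).1
      have hmne : (chainMin C).Nonempty := hK.nonempty _ (hCK.2.1 _ hmC)
      obtain ⟨v, hvmem, hveq⟩ := selData_spec hmne
      rw [hveq]
      refine simplexSet_mono (Finset.singleton_subset_iff.mpr ?_) (ind_mem _)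
      exact hCmax ((chainMin_spec' hCK).2 _ (chainMax_spec' hCK).1 hvmem)
    · refine simplexSet_mono hCmax (affToFun_mem (baryData_mem hCK.1) fun τ hτ => ?_)
      exact simplexSet_mono ((chainMax_spec' hCK).2 τ hτ)
        (baryData_mem (hK.nonempty τ (hCK.2.1 τ hτ)))
  -- derived single conditions
  have hq1 : ∀ S ∈ Sd (Sd K), ∃ ρ ∈ L, ∀ C ∈ S, baryData (C.image a) ∈ simplexSet ρ :=
    fun S hS => (hjoint1 S hS).elim fun ρ h => ⟨ρ, h.1, fun C hC => (h.2 C hC).1⟩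
  have hq2 : ∀ S ∈ Sd (Sd K), ∃ ρ ∈ L, ∀ C ∈ S,
      affToFun (fun τ => ind (a τ)) (baryData C) ∈ simplexSet ρ :=
    fun S hS => (hjoint1 S hS).elim fun ρ h => ⟨ρ, h.1, fun C hC => (h.2 C hC).2⟩
  have hq1' : ∀ S ∈ Sd (Sd K), ∃ ρ ∈ L, ∀ C ∈ S,
      affToFun baryData (ind (C.image a)) ∈ simplexSet ρ := by
    intro S hS
    obtain ⟨ρ, hρ, h⟩ := hq1 S hS
    exact ⟨ρ, hρ, fun C hC => by rw [affToFun_ind]; exact h C hC⟩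
  have hχ : ∀ S ∈ Sd (Sd K), ∃ ρ ∈ K, ∀ C ∈ S, ind (b (C.image a)) ∈ simplexSet ρ :=
    fun S hS => (hjoint2 S hS).elim fun ρ h => ⟨ρ, h.1, fun C hC => (h.2 C hC).1⟩
  have hχ' : ∀ S ∈ Sd (Sd K), ∃ ρ ∈ K, ∀ C ∈ S,
      affToFun (fun ρ' => ind (b ρ')) (ind (C.image a)) ∈ simplexSet ρ := by
    intro S hS
    obtain ⟨ρ, hρ, h⟩ := hχ S hS
    exact ⟨ρ, hρ, fun C hC => by rw [affToFun_ind]; exact h C hC⟩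
  have hm : ∀ S ∈ Sd (Sd K), ∃ ρ ∈ K, ∀ C ∈ S, selData (chainMin C) ∈ simplexSet ρ :=
    fun S hS => (hjoint2 S hS).elim fun ρ h => ⟨ρ, h.1, fun C hC => (h.2 C hC).2⟩
  have hBB : ∀ S ∈ Sd (Sd K), ∃ ρ ∈ K, ∀ C ∈ S,
      affToFun baryData (baryData C) ∈ simplexSet ρ :=
    fun S hS => (hjoint3 S hS).elim fun ρ h => ⟨ρ, h.1, fun C hC => (h.2 C hC).2⟩
  -- the maps
  set φ := affMap (fun τ => ind (a τ)) hφ with hφdef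
  set ψ := affMap (fun ρ => ind (b ρ)) hψ with hψdef
  set Sφ := affMap (fun C : Finset (Finset V) => ind (C.image a)) (sdphi_hyp hK haK hrL)
    with hSφdef
  set Q := (((Bhomeo hK.sd).symm : C(Realization (Sd K), Realization (Sd (Sd K))))).comp
    (((Bhomeo hK).symm : C(Realization K, Realization (Sd K)))) with hQdef
  -- naturality square, up to homotopy
  have h_nat : ((Bmap hL).comp Sφ).Homotopic (φ.comp (Bmap hK.sd)) := by
    have e1 : (Bmap hL).comp Sφ = affMap (fun C => baryData (C.image a)) hq1 := by
      rw [hSφdef]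
      show (affMap baryData (bary_hyp hL)).comp _ = _
      rw [affMap_comp (fun C : Finset (Finset V) => ind (C.image a)) baryData
        (sdphi_hyp hK haK hrL) (bary_hyp hL) hq1']
      exact affMap_congr_data _ _ (funext fun C => affToFun_ind _ _)
    have e2 : φ.comp (Bmap hK.sd)
        = affMap (fun C => affToFun (fun τ => ind (a τ)) (baryData C)) hq2 := by
      rw [hφdef]
      show (affMap (fun τ => ind (a τ)) hφ).comp (affMap baryData (bary_hyp hK.sd)) = _
      exact affMap_comp baryData (fun τ => ind (a τ)) (bary_hyp hK.sd) hφ hq2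
    rw [e1, e2]
    exact affMap_homotopic _ _ hq1 hq2 hjoint1
  -- the composite simplicial map χ = ψ ∘ Sd φ
  have e_chi : ψ.comp Sφ = affMap (fun C : Finset (Finset V) => ind (b (C.image a))) hχ := by
    rw [hψdef, hSφdef]
    rw [affMap_comp (fun C : Finset (Finset V) => ind (C.image a)) (fun ρ => ind (b ρ))
      (sdphi_hyp hK haK hrL) hψ hχ']
    exact affMap_congr_data _ _ (funext fun C => affToFun_ind _ _)
  -- χ is homotopic to the vertex-selection map m
  have h_chi_m : (affMap (fun C : Finset (Finset V) => ind (b (C.image a))) hχ).Homotopic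
      (affMap (fun C : Finset (Finset V) => selData (chainMin C)) hm) :=
    affMap_homotopic _ _ hχ hm hjoint2
  -- m is homotopic to B ∘ B
  have h_m_BB : (affMap (fun C : Finset (Finset V) => selData (chainMin C)) hm).Homotopic
      (affMap (fun C : Finset (Finset V) => affToFun baryData (baryData C)) hBB) :=
    affMap_homotopic _ _ hm hBB hjoint3
  -- B ∘ B as an affine map
  have e_BB : (Bmap hK).comp (Bmap hK.sd)
      = affMap (fun C : Finset (Finset V) => affToFun baryData (baryData C)) hBB := by
    show (affMap baryData (bary_hyp hK)).comp (affMap baryData (bary_hyp hK.sd)) = _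
    exact affMap_comp baryData baryData (bary_hyp hK.sd) (bary_hyp hK) hBB
  -- assemble
  have h1 : (((Bmap hL).comp Sφ).comp Q).Homotopic (φ.comp ((Bhomeo hK).symm : C(_, _))) := by
    have h := ContinuousMap.Homotopic.comp h_nat (ContinuousMap.Homotopic.refl Q)
    have heq : (φ.comp (Bmap hK.sd)).comp Q = φ.comp ((Bhomeo hK).symm : C(_, _)) := by
      refine ContinuousMap.ext fun p => ?_
      show φ ((Bmap hK.sd) ((Bhomeo hK.sd).symm ((Bhomeo hK).symm p)))
        = φ ((Bhomeo hK).symm p)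
      exact congrArg _ ((Bhomeo hK.sd).apply_symm_apply _)
    rwa [heq] at h
  have h2 := ContinuousMap.Homotopic.comp
    (ContinuousMap.Homotopic.refl (ψ.comp ((Bhomeo hL).symm : C(_, _)))) h1
  have heq2 : (ψ.comp ((Bhomeo hL).symm : C(_, _))).comp (((Bmap hL).comp Sφ).comp Q)
      = (ψ.comp Sφ).comp Q := by
    refine ContinuousMap.ext fun p => ?_
    show ψ ((Bhomeo hL).symm ((Bmap hL) (Sφ (Q p)))) = ψ (Sφ (Q p))
    exact congrArg _ ((Bhomeo hL).symm_apply_apply _)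
  rw [heq2, e_chi] at h2
  -- h2 : ((affMap χdata hχ).comp Q).Homotopic goal-LHS
  have h4 := ContinuousMap.Homotopic.comp h_chi_m (ContinuousMap.Homotopic.refl Q)
  have h5 := ContinuousMap.Homotopic.comp h_m_BB (ContinuousMap.Homotopic.refl Q)
  have h6 : (affMap (fun C : Finset (Finset V) => affToFun baryData (baryData C)) hBB).comp Q
      = ContinuousMap.id (Realization K) := by
    rw [← e_BB]
    refine ContinuousMap.ext fun p => ?_
    show (Bmap hK) ((Bmap hK.sd) ((Bhomeo hK.sd).symm ((Bhomeo hK).symm p))) = p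
    rw [show (Bmap hK.sd) ((Bhomeo hK.sd).symm ((Bhomeo hK).symm p))
      = (Bhomeo hK).symm p from (Bhomeo hK.sd).apply_symm_apply _]
    exact (Bhomeo hK).apply_symm_apply p
  have hfinal := (h2.symm.trans (h4.trans h5))
  rw [h6] at hfinal
  exact hfinal

end core

end Dowker
namespace Dowker

variable {X Y : Type*}

lemma dowkerF_good (R : Set (X × Y)) : IsGood (dowkerF R) := by
  constructor
  · exact fun τ hτ => hτ.1
  · rintro τ ⟨hne, x, hx⟩ τ' hsub hne'
    exact ⟨hne', x, fun y hy => hx y (hsub hy)⟩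

lemma dowkerE_good (R : Set (X × Y)) : IsGood (dowkerE R) := by
  constructor
  · exact fun σ hσ => hσ.1
  · rintro σ ⟨hne, y, hy⟩ σ' hsub hne'
    exact ⟨hne', y, fun x hx => hy x (hsub hx)⟩

end Dowker

theorem functorial_dowker_theorem' {X Y : Type*} (R R' : Set (X × Y))
    (hRR' : R ⊆ R') (hR : R.Nonempty) :
    ∃ (Γ : ContinuousMap.HomotopyEquiv (Realization (dowkerF R)) (Realization (dowkerE R)))
      (Γ' : ContinuousMap.HomotopyEquiv (Realization (dowkerF R')) (Realization (dowkerE R'))),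
      ((inclusionMap (dowkerE_mono hRR')).comp Γ.toFun).Homotopic
        (Γ'.toFun.comp (inclusionMap (dowkerF_mono hRR'))) := by
  classical
  open Dowker in
  obtain ⟨⟨x₀, y₀⟩, -⟩ := hR
  -- witness functions
  set a : Finset Y → X := fun τ => if h : ∃ x, ∀ y ∈ τ, (x, y) ∈ R then h.choose else x₀
    with hadef
  set a' : Finset Y → X := fun τ => if h : ∃ x, ∀ y ∈ τ, (x, y) ∈ R then h.choose else
      (if h' : ∃ x, ∀ y ∈ τ, (x, y) ∈ R' then h'.choose else x₀) with ha'def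
  set b : Finset X → Y := fun σ => if h : ∃ y, ∀ x ∈ σ, (x, y) ∈ R then h.choose else y₀
    with hbdef
  set b' : Finset X → Y := fun σ => if h : ∃ y, ∀ x ∈ σ, (x, y) ∈ R' then h.choose else y₀
    with hb'def
  have haF : ∀ τ ∈ dowkerF R, ∀ y ∈ τ, (a τ, y) ∈ R := by
    intro τ hτ y hy
    simp only [hadef]
    rw [dif_pos hτ.2]
    exact hτ.2.choose_spec y hy
  have haF' : ∀ τ ∈ dowkerF R', ∀ y ∈ τ, (a' τ, y) ∈ R' := by
    intro τ hτ y hy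
    simp only [ha'def]
    by_cases h : ∃ x, ∀ y ∈ τ, (x, y) ∈ R
    · rw [dif_pos h]
      exact hRR' (h.choose_spec y hy)
    · rw [dif_neg h, dif_pos hτ.2]
      exact hτ.2.choose_spec y hy
  have haa' : ∀ τ ∈ dowkerF R, a' τ = a τ := by
    intro τ hτ
    simp only [hadef, ha'def]
    rw [dif_pos hτ.2, dif_pos hτ.2]
  have hbE : ∀ σ ∈ dowkerE R, ∀ x ∈ σ, (x, b σ) ∈ R := by
    intro σ hσ x hx
    simp only [hbdef]
    rw [dif_pos hσ.2]
    exact hσ.2.choose_spec x hx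
  have hbE' : ∀ σ ∈ dowkerE R', ∀ x ∈ σ, (x, b' σ) ∈ R' := by
    intro σ hσ x hx
    simp only [hb'def]
    rw [dif_pos hσ.2]
    exact hσ.2.choose_spec x hx
  -- goodness
  have hKF := dowkerF_good R
  have hKE := dowkerE_good R
  have hKF' := dowkerF_good R'
  have hKE' := dowkerE_good R'
  -- membership criteria
  have hrF : ∀ τ : Finset Y, τ.Nonempty → (∃ x, ∀ y ∈ τ, (x, y) ∈ R) → τ ∈ dowkerF R :=
    fun τ h1 h2 => ⟨h1, h2⟩
  have hrE : ∀ σ : Finset X, σ.Nonempty → (∃ y, ∀ x ∈ σ, (x, y) ∈ R) → σ ∈ dowkerE R :=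
    fun σ h1 h2 => ⟨h1, h2⟩
  have hrF' : ∀ τ : Finset Y, τ.Nonempty → (∃ x, ∀ y ∈ τ, (x, y) ∈ R') → τ ∈ dowkerF R' :=
    fun τ h1 h2 => ⟨h1, h2⟩
  have hrE' : ∀ σ : Finset X, σ.Nonempty → (∃ y, ∀ x ∈ σ, (x, y) ∈ R') → σ ∈ dowkerE R' :=
    fun σ h1 h2 => ⟨h1, h2⟩
  -- affine map hypotheses (relation r : Y → X → Prop, r y x ↔ (x,y) ∈ R)
  have hφ := phi_hyp (r := fun (y : Y) (x : X) => (x, y) ∈ R) (a := a) hKF haF hrE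
  have hψ := phi_hyp (r := fun (x : X) (y : Y) => (x, y) ∈ R) (a := b) hKE hbE hrF
  have hφ' := phi_hyp (r := fun (y : Y) (x : X) => (x, y) ∈ R') (a := a') hKF' haF' hrE'
  have hψ' := phi_hyp (r := fun (x : X) (y : Y) => (x, y) ∈ R') (a := b') hKE' hbE' hrF'
  -- the maps
  set Γmap := (affMap (fun τ => ind (a τ)) hφ).comp ((Bhomeo hKF).symm : C(Realization (dowkerF R), _))
    with hΓdef
  set Δmap := (affMap (fun σ => ind (b σ)) hψ).comp ((Bhomeo hKE).symm : C(Realization (dowkerE R), _))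
    with hΔdef
  set Γmap' := (affMap (fun τ => ind (a' τ)) hφ').comp ((Bhomeo hKF').symm : C(Realization (dowkerF R'), _))
    with hΓ'def
  set Δmap' := (affMap (fun σ => ind (b' σ)) hψ').comp ((Bhomeo hKE').symm : C(Realization (dowkerE R'), _))
    with hΔ'def
  have left_inv : (Δmap.comp Γmap).Homotopic (ContinuousMap.id _) :=
    core_homotopic hKF hKE haF hbE hrF hrE hφ hψ
  have right_inv : (Γmap.comp Δmap).Homotopic (ContinuousMap.id _) :=
    core_homotopic hKE hKF hbE haF hrE hrF hψ hφ
  have left_inv' : (Δmap'.comp Γmap').Homotopic (ContinuousMap.id _) :=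
    core_homotopic hKF' hKE' haF' hbE' hrF' hrE' hφ' hψ'
  have right_inv' : (Γmap'.comp Δmap').Homotopic (ContinuousMap.id _) :=
    core_homotopic hKE' hKF' hbE' haF' hrE' hrF' hψ' hφ'
  refine ⟨⟨Γmap, Δmap, left_inv, right_inv⟩, ⟨Γmap', Δmap', left_inv', right_inv'⟩, ?_⟩
  -- the square commutes exactly
  have hsquare : (inclusionMap (dowkerE_mono hRR')).comp Γmap
      = Γmap'.comp (inclusionMap (dowkerF_mono hRR')) := by
    refine ContinuousMap.ext fun p => Subtype.ext ?_
    have hSdF : Sd (dowkerF R) ⊆ Sd (dowkerF R') := sd_mono (dowkerF_mono hRR')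
    have hBnat : (Bhomeo hKF').symm ((inclusionMap (dowkerF_mono hRR')) p)
        = inclusionMap hSdF ((Bhomeo hKF).symm p) := by
      rw [show ∀ (e : Realization (Sd (dowkerF R')) ≃ₜ Realization (dowkerF R'))
        (x : Realization (dowkerF R')) (y : Realization (Sd (dowkerF R'))),
        (e.symm x = y) = (x = e y) from fun e x y =>
          propext e.toEquiv.symm_apply_eq]
      refine Subtype.ext ?_
      have h2 : affToFun baryData ((Bhomeo hKF).symm p).1
          = ((Bhomeo hKF) ((Bhomeo hKF).symm p)).1 := rfl
      show p.1 = affToFun baryData ((Bhomeo hKF).symm p).1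
      rw [h2, (Bhomeo hKF).apply_symm_apply]
    show affToFun (fun τ => ind (a τ)) ((Bhomeo hKF).symm p).1
      = affToFun (fun τ => ind (a' τ)) ((Bhomeo hKF').symm
          ((inclusionMap (dowkerF_mono hRR')) p)).1
    rw [hBnat]
    show affToFun (fun τ => ind (a τ)) ((Bhomeo hKF).symm p).1
      = affToFun (fun τ => ind (a' τ)) ((Bhomeo hKF).symm p).1
    refine affToFun_congr fun τ hτ => ?_
    obtain ⟨C, hC, hg⟩ := ((Bhomeo hKF).symm p).2
    have hτC : τ ∈ C := by
      by_contra hn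
      exact hτ (hg.1 τ hn)
    rw [haa' τ (hC.2.1 τ hτC)]
  show ((inclusionMap (dowkerE_mono hRR')).comp Γmap).Homotopic
    (Γmap'.comp (inclusionMap (dowkerF_mono hRR')))
  rw [hsquare]

/-- **The Functorial Dowker Theorem.** For nested nonempty relations `R ⊆ R' ⊆ X × Y`,
there are homotopy equivalences `Γ : |F_R| → |E_R|` and `Γ' : |F_{R'}| → |E_{R'}|`
commuting, up to homotopy, with the canonical inclusions. -/
theorem functorial_dowker_theorem {X Y : Type*} (R R' : Set (X × Y))
    (hRR' : R ⊆ R') (hR : R.Nonempty) :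
    ∃ (Γ : ContinuousMap.HomotopyEquiv (Realization (dowkerF R)) (Realization (dowkerE R)))
      (Γ' : ContinuousMap.HomotopyEquiv (Realization (dowkerF R')) (Realization (dowkerE R'))),
      ((inclusionMap (dowkerE_mono hRR')).comp Γ.toFun).Homotopic
        (Γ'.toFun.comp (inclusionMap (dowkerF_mono hRR'))) :=
  functorial_dowker_theorem' R R' hRR' hR
end
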